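/- arXiv:2009.04032 — 7 statements merged into one kernel-verified Lean document; each statement's English description precedes it below -/
import Mathlib

section
/- If a nonnegative vector a is weakly majorized by a nonnegative vector b, then for every real s ≥ 1 the entrywise power a^s is weakly majorized by b^s. -/
open Finset

/-- A vector rearranged in increasing order. -/
noncomputable def ascSort {n : ℕ} (a : Fin n → ℝ) : Fin n → ℝ :=
  a ∘ Tuple.sort a

/-- A vector rearranged in decreasing order. -/
noncomputable def descSort {n : ℕ} (a : Fin n → ℝ) : Fin n → ℝ :=
  fun i => ascSort a i.rev

/-- The sum of the entries of `a` with index at most `k`. -/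
noncomputable def partialSum {n : ℕ} (a : Fin n → ℝ) (k : Fin n) : ℝ :=
  ∑ i ∈ Finset.univ.filter (fun i => i ≤ k), a i

/-- The product of the entries of `a` with index at most `k`. -/
noncomputable def partialProd {n : ℕ} (a : Fin n → ℝ) (k : Fin n) : ℝ :=
  ∏ i ∈ Finset.univ.filter (fun i => i ≤ k), a i

/-- Weak majorization: partial sums of the decreasing rearrangement of `a` are
bounded by those of `b`. -/
def WeakMaj {n : ℕ} (a b : Fin n → ℝ) : Prop :=
  ∀ k : Fin n, partialSum (descSort a) k ≤ partialSum (descSort b) k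

/-- Tangent-line inequality for `x ^ s`. -/
lemma tangent_rpow {s x y : ℝ} (hs : 1 ≤ s) (hx : 0 ≤ x) (hy : 0 ≤ y) :
    x ^ s - y ^ s ≤ s * x ^ (s - 1) * (x - y) := by
  rcases eq_or_lt_of_le hx with h0 | h0
  · rcases eq_or_lt_of_le hs with h1 | h1
    · subst h1
      simp [← h0, Real.rpow_one]
    · rw [← h0]
      rw [Real.zero_rpow (by linarith), Real.zero_rpow (by linarith)]
      have : (0:ℝ) ≤ y ^ s := Real.rpow_nonneg hy s
      nlinarith
  · set t := y / x with ht
    have htn : 0 ≤ t := div_nonneg hy h0.le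
    have hyx : y = t * x := by rw [ht, div_mul_cancel₀ _ h0.ne']
    have hber : 1 + s * (t - 1) ≤ t ^ s := by
      have := one_add_mul_self_le_rpow_one_add (s := t - 1) (by linarith) hs
      simpa using this
    have hxs : (0:ℝ) < x ^ s := Real.rpow_pos_of_pos h0 s
    have hmul : (1 + s * (t - 1)) * x ^ s ≤ t ^ s * x ^ s :=
      mul_le_mul_of_nonneg_right hber hxs.le
    have hpow : (t * x) ^ s = t ^ s * x ^ s := Real.mul_rpow htn h0.le
    have hx1 : x ^ (s - 1) * x = x ^ s := by
      rw [Real.rpow_sub_one h0.ne']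
      field_simp
    rw [hyx, hpow]
    have hr : s * x ^ (s - 1) * (x - t * x) = s * (1 - t) * x ^ s := by
      rw [← hx1]; ring
    rw [hr]
    nlinarith [hmul]

/-- Abel-summation style bound. -/
lemma abel_aux (c d : ℕ → ℝ) : ∀ k : ℕ, (∀ i, i < k → c (i+1) ≤ c i) →
    (∀ j, j < k → ∑ i ∈ range (j+1), d i ≤ 0) →
    ∑ i ∈ range (k+1), c i * d i ≤ c k * ∑ i ∈ range (k+1), d i := by
  intro k
  induction k with
  | zero => simp
  | succ k ih =>
    intro hdec hD
    rw [sum_range_succ, sum_range_succ (f := d), mul_add]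
    have h1 := ih (fun i hi => hdec i (hi.trans (Nat.lt_succ_self k)))
      (fun j hj => hD j (hj.trans (Nat.lt_succ_self k)))
    have h2 : c k * ∑ i ∈ range (k+1), d i ≤ c (k+1) * ∑ i ∈ range (k+1), d i :=
      mul_le_mul_of_nonpos_right (hdec k (Nat.lt_succ_self k)) (hD k (Nat.lt_succ_self k))
    linarith

lemma ascSort_comp {n : ℕ} (a : Fin n → ℝ) (g : ℝ → ℝ) (hg : Monotone g) :
    ascSort (g ∘ a) = g ∘ ascSort a := by
  have h1 : Monotone ((g ∘ a) ∘ Tuple.sort (g ∘ a)) := Tuple.monotone_sort _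
  have h2 : Monotone ((g ∘ a) ∘ Tuple.sort a) :=
    fun i j hij => hg (Tuple.monotone_sort a hij)
  exact Tuple.unique_monotone h1 h2

lemma descSort_comp {n : ℕ} (a : Fin n → ℝ) (g : ℝ → ℝ) (hg : Monotone g) :
    descSort (g ∘ a) = g ∘ descSort a := by
  funext i
  show ascSort (g ∘ a) i.rev = g (ascSort a i.rev)
  rw [ascSort_comp a g hg]
  rfl

lemma descSort_nonneg {n : ℕ} (a : Fin n → ℝ) (ha : ∀ i, 0 ≤ a i) (i : Fin n) :
    0 ≤ descSort a i := ha _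

lemma descSort_anti {n : ℕ} (a : Fin n → ℝ) {i j : Fin n} (hij : i ≤ j) :
    descSort a j ≤ descSort a i :=
  Tuple.monotone_sort a (Fin.rev_le_rev.mpr hij)

/-- Extend a tuple by zeros. -/
noncomputable def pad {n : ℕ} (a : Fin n → ℝ) : ℕ → ℝ :=
  fun i => if h : i < n then a ⟨i, h⟩ else 0

lemma partialSum_eq {n : ℕ} (a : Fin n → ℝ) (k : Fin n) :
    partialSum a k = ∑ i ∈ range (k.val + 1), pad a i := by
  rw [partialSum, Finset.sum_filter]
  have h1 : ∑ i : Fin n, (if i ≤ k then a i else 0)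
      = ∑ i ∈ range n, (fun j => if j ≤ k.val then pad a j else 0) i := by
    rw [← Fin.sum_univ_eq_sum_range]
    refine Finset.sum_congr rfl fun i _ => ?_
    simp only [pad, Fin.le_def, i.isLt, dif_pos, Fin.eta]
  rw [h1]
  rw [← Finset.sum_subset (Finset.range_subset_range.mpr k.isLt)
    (fun x _ hnx => by
      simp only [Finset.mem_range, not_lt] at hnx
      exact if_neg (by omega))]
  refine Finset.sum_congr rfl fun i hi => ?_
  simp only [Finset.mem_range] at hi
  exact if_pos (by omega)

theorem weakMaj_rpow {n : ℕ} (a b : Fin n → ℝ)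
    (ha : ∀ i, 0 ≤ a i) (hb : ∀ i, 0 ≤ b i) (hmaj : WeakMaj a b) :
    ∀ s : ℝ, 1 ≤ s → WeakMaj (fun i => a i ^ s) (fun i => b i ^ s) := by
  intro s hs k
  have hAnn : ∀ i, 0 ≤ descSort a i := descSort_nonneg a ha
  have hBnn : ∀ i, 0 ≤ descSort b i := descSort_nonneg b hb
  have hg : Monotone (fun x : ℝ => max x 0 ^ s) := fun x y hxy =>
    Real.rpow_le_rpow (le_max_right x 0) (max_le_max hxy le_rfl) (by linarith)
  have hda : descSort (fun i => a i ^ s) = fun i => descSort a i ^ s := by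
    have h1 : (fun i => a i ^ s) = (fun x : ℝ => max x 0 ^ s) ∘ a := by
      funext i; simp [max_eq_left (ha i)]
    rw [h1, descSort_comp a _ hg]
    funext i; simp [max_eq_left (hAnn i)]
  have hdb : descSort (fun i => b i ^ s) = fun i => descSort b i ^ s := by
    have h1 : (fun i => b i ^ s) = (fun x : ℝ => max x 0 ^ s) ∘ b := by
      funext i; simp [max_eq_left (hb i)]
    rw [h1, descSort_comp b _ hg]
    funext i; simp [max_eq_left (hBnn i)]
  rw [hda, hdb, partialSum_eq, partialSum_eq]
  set c : ℕ → ℝ := fun i => s * pad (fun j => descSort a j ^ (s-1)) i with hc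
  set d : ℕ → ℝ := fun i => pad (descSort a) i - pad (descSort b) i with hd
  have hDle : ∀ j, j ≤ k.val → ∑ i ∈ range (j+1), d i ≤ 0 := by
    intro j hj
    have hjn : j < n := lt_of_le_of_lt hj k.isLt
    have hm := hmaj ⟨j, hjn⟩
    rw [partialSum_eq, partialSum_eq] at hm
    simp only [hd, Finset.sum_sub_distrib]
    linarith
  have hstep : ∑ i ∈ range (k.val+1),
        (pad (fun j => descSort a j ^ s) i - pad (fun j => descSort b j ^ s) i)
      ≤ ∑ i ∈ range (k.val+1), c i * d i := by
    refine Finset.sum_le_sum fun i hi => ?_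
    simp only [Finset.mem_range] at hi
    have hin : i < n := by omega
    simp only [pad, dif_pos hin, hc, hd]
    have ht := tangent_rpow (x := descSort a ⟨i, hin⟩) (y := descSort b ⟨i, hin⟩)
      hs (hAnn _) (hBnn _)
    nlinarith [ht]
  have hdec : ∀ i, i < k.val → c (i+1) ≤ c i := by
    intro i hi
    have hi1 : i + 1 < n := by have := k.isLt; omega
    have hin : i < n := by omega
    simp only [hc, pad, dif_pos hi1, dif_pos hin]
    refine mul_le_mul_of_nonneg_left ?_ (by linarith)
    exact Real.rpow_le_rpow (hAnn _) (descSort_anti a (by simp [Fin.mk_le_mk])) (by linarith)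
  have habel := abel_aux c d k.val hdec (fun j hj => hDle j (le_of_lt hj))
  have hck : 0 ≤ c k.val := by
    simp only [hc, pad, dif_pos k.isLt]
    exact mul_nonneg (by linarith) (Real.rpow_nonneg (hAnn _) _)
  have hfin : c k.val * ∑ i ∈ range (k.val+1), d i ≤ 0 :=
    mul_nonpos_of_nonneg_of_nonpos hck (hDle k.val le_rfl)
  have := Finset.sum_sub_distrib (s := range (k.val+1))
    (f := fun i => pad (fun j => descSort a j ^ s) i)
    (g := fun i => pad (fun j => descSort b j ^ s) i)
  linarith [hstep, habel, hfin, this]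
end

section
/- If a and b are nonnegative vectors with a log-majorized by b and a majorized by b (i.e., both with equality in the n-th partial condition), then a is a permutation of b. -/
open Finset

theorem aux_eq_of_maj (n : ℕ) (A B : ℕ → ℝ)
    (hA0 : ∀ i, 0 ≤ A i) (hB0 : ∀ i, 0 ≤ B i)
    (hAanti : ∀ j k : ℕ, j ≤ k → A k ≤ A j)
    (hlog : ∀ k, k < n → ∏ i ∈ range (k + 1), A i ≤ ∏ i ∈ range (k + 1), B i)
    (hmaj : ∀ k, k < n → ∑ i ∈ range (k + 1), A i ≤ ∑ i ∈ range (k + 1), B i)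
    (hEq : ∑ i ∈ range n, A i = ∑ i ∈ range n, B i)
    (hAtop : ∀ k, n ≤ k → A k = 0) (hBtop : ∀ k, n ≤ k → B k = 0) :
    ∀ i, A i = B i := by
  classical
  -- r : first index where A vanishes
  have hex : ∃ k, A k = 0 := ⟨n, hAtop n le_rfl⟩
  set r := Nat.find hex with hrdef
  have hAr : A r = 0 := Nat.find_spec hex
  have hrn : r ≤ n := Nat.find_min' hex (hAtop n le_rfl)
  have hApos : ∀ i, i < r → 0 < A i := by
    intro i hi
    exact lt_of_le_of_ne (hA0 i) (Ne.symm (Nat.find_min hex hi))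
  have hAzero : ∀ i, r ≤ i → A i = 0 :=
    fun i hi => le_antisymm (hAr ▸ hAanti r i hi) (hA0 i)
  -- Z1 : B vanishes → A vanishes
  have Z1 : ∀ k, k < n → B k = 0 → A k = 0 := by
    intro k hk hBk
    have hPB : ∏ i ∈ range (k + 1), B i = 0 :=
      Finset.prod_eq_zero (Finset.self_mem_range_succ k) hBk
    have hPA : ∏ i ∈ range (k + 1), A i = 0 :=
      le_antisymm (hPB ▸ hlog k hk) (Finset.prod_nonneg fun i _ => hA0 i)
    obtain ⟨j, hj, hjA⟩ := Finset.prod_eq_zero_iff.mp hPA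
    have hjk : j ≤ k := Nat.lt_succ_iff.mp (Finset.mem_range.mp hj)
    exact le_antisymm (hjA ▸ hAanti j k hjk) (hA0 k)
  have hBpos : ∀ i, i < r → 0 < B i := by
    intro i hi
    refine lt_of_le_of_ne (hB0 i) fun h => ?_
    exact absurd (Z1 i (lt_of_lt_of_le hi hrn) h.symm) (ne_of_gt (hApos i hi))
  -- Z2 : A vanishes → B vanishes (for i < n)
  have Z2 : ∀ k, k < n → A k = 0 → B k = 0 := by
    intro k hk hAk
    have hAk0 : ∀ j, k ≤ j → A j = 0 :=
      fun j hj => le_antisymm (hAk ▸ hAanti k j hj) (hA0 j)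
    by_cases hk0 : k = 0
    · subst hk0
      have hsum : ∑ i ∈ range n, A i = 0 :=
        Finset.sum_eq_zero fun i _ => hAk0 i (Nat.zero_le i)
      have : ∑ i ∈ range n, B i = 0 := hEq ▸ hsum
      have := (Finset.sum_eq_zero_iff_of_nonneg (fun i _ => hB0 i)).mp this
      exact this 0 (Finset.mem_range.mpr hk)
    · set m := k - 1 with hm
      have hkm : k = m + 1 := by omega
      have hmn : m < n := lt_of_le_of_lt (by omega) hk
      have h1 : ∑ i ∈ range n, A i = ∑ i ∈ range (m + 1), A i := by
        refine (Finset.sum_subset (Finset.range_subset_range.mpr (by omega)) ?_).symm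
        intro j hj hj'
        exact hAk0 j (by simp only [Finset.mem_range] at hj hj'; omega)
      have h2 : ∑ i ∈ range n, B i ≤ ∑ i ∈ range (m + 1), B i := by
        calc ∑ i ∈ range n, B i = ∑ i ∈ range n, A i := hEq.symm
          _ = ∑ i ∈ range (m + 1), A i := h1
          _ ≤ ∑ i ∈ range (m + 1), B i := hmaj m hmn
      have h3 : ∑ i ∈ range (m + 1), B i + ∑ i ∈ Finset.Ico (m + 1) n, B i
          = ∑ i ∈ range n, B i := by
        rw [Finset.range_eq_Ico, Finset.range_eq_Ico]
        exact Finset.sum_Ico_consecutive (m := 0) (n := m + 1) (k := n) B (by omega) (by omega)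
      have h4 : ∑ i ∈ Finset.Ico (m + 1) n, B i ≤ 0 := by linarith
      have h5 : ∑ i ∈ Finset.Ico (m + 1) n, B i = 0 :=
        le_antisymm h4 (Finset.sum_nonneg fun i _ => hB0 i)
      have := (Finset.sum_eq_zero_iff_of_nonneg (fun i _ => hB0 i)).mp h5
      exact this k (Finset.mem_Ico.mpr ⟨by omega, hk⟩)
  -- the log-difference vector
  set d : ℕ → ℝ := fun i => if i < r then Real.log (B i) - Real.log (A i) else 0 with hd
  -- partial sums of d are nonnegative
  have hD : ∀ k, 0 ≤ ∑ i ∈ range (k + 1), d i := by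
    intro k
    set m := min (k + 1) r with hmdef
    have hfil : (range (k + 1)).filter (fun i => i < r) = range m := by
      ext j; simp only [Finset.mem_filter, Finset.mem_range, hmdef]; omega
    have hsum : ∑ i ∈ range (k + 1), d i
        = ∑ i ∈ range m, (Real.log (B i) - Real.log (A i)) := by
      rw [hd, ← hfil, Finset.sum_filter]
    rw [hsum, Finset.sum_sub_distrib]
    have hmr : m ≤ r := min_le_right _ _
    have hAprodpos : 0 < ∏ i ∈ range m, A i :=
      Finset.prod_pos fun i hi => hApos i (lt_of_lt_of_le (Finset.mem_range.mp hi) hmr)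
    have hprodle : ∏ i ∈ range m, A i ≤ ∏ i ∈ range m, B i := by
      by_cases h0 : m = 0
      · simp [h0]
      · have h1 : m = m - 1 + 1 := by omega
        have : m - 1 < n := by omega
        calc ∏ i ∈ range m, A i = ∏ i ∈ range (m - 1 + 1), A i := by rw [← h1]
          _ ≤ ∏ i ∈ range (m - 1 + 1), B i := hlog _ this
          _ = ∏ i ∈ range m, B i := by rw [← h1]
    have hlogA : Real.log (∏ i ∈ range m, A i) = ∑ i ∈ range m, Real.log (A i) :=
      Real.log_prod fun i hi =>
        ne_of_gt (hApos i (lt_of_lt_of_le (Finset.mem_range.mp hi) hmr))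
    have hlogB : Real.log (∏ i ∈ range m, B i) = ∑ i ∈ range m, Real.log (B i) :=
      Real.log_prod fun i hi =>
        ne_of_gt (hBpos i (lt_of_lt_of_le (Finset.mem_range.mp hi) hmr))
    have := Real.log_le_log hAprodpos hprodle
    rw [hlogA, hlogB] at this
    linarith
  -- Abel-type bound
  have key : ∀ k, A k * ∑ i ∈ range (k + 1), d i ≤ ∑ i ∈ range (k + 1), A i * d i := by
    intro k
    induction k with
    | zero => simp
    | succ k ih =>
      have h1 : A (k + 1) * ∑ i ∈ range (k + 1), d i ≤ A k * ∑ i ∈ range (k + 1), d i :=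
        mul_le_mul_of_nonneg_right (hAanti k (k + 1) (Nat.le_succ k)) (hD k)
      rw [Finset.sum_range_succ, Finset.sum_range_succ (f := fun i => A i * d i)]
      calc A (k + 1) * (∑ i ∈ range (k + 1), d i + d (k + 1))
          = A (k + 1) * ∑ i ∈ range (k + 1), d i + A (k + 1) * d (k + 1) := by ring
        _ ≤ ∑ i ∈ range (k + 1), A i * d i + A (k + 1) * d (k + 1) := by linarith
  -- total weighted sum is nonnegative
  have htot : 0 ≤ ∑ i ∈ range n, A i * d i := by
    by_cases h0 : n = 0
    · simp [h0]
    · have h1 : n = n - 1 + 1 := by omega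
      have : (0:ℝ) ≤ A (n - 1) * ∑ i ∈ range (n - 1 + 1), d i :=
        mul_nonneg (hA0 _) (hD _)
      calc (0:ℝ) ≤ A (n - 1) * ∑ i ∈ range (n - 1 + 1), d i := this
        _ ≤ ∑ i ∈ range (n - 1 + 1), A i * d i := key _
        _ = ∑ i ∈ range n, A i * d i := by rw [← h1]
  -- per-term bound
  have hterm : ∀ i, i < n → A i * d i ≤ B i - A i := by
    intro i hi
    by_cases hir : i < r
    · have hAi := hApos i hir
      have hBi := hBpos i hir
      have hdiv : (0:ℝ) < B i / A i := div_pos hBi hAi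
      have hle : Real.log (B i / A i) ≤ B i / A i - 1 := Real.log_le_sub_one_of_pos hdiv
      have hdi : d i = Real.log (B i / A i) := by
        rw [hd]; simp only [hir, if_true]
        rw [Real.log_div (ne_of_gt hBi) (ne_of_gt hAi)]
      rw [hdi]
      have := mul_le_mul_of_nonneg_left hle (le_of_lt hAi)
      calc A i * Real.log (B i / A i) ≤ A i * (B i / A i - 1) := this
        _ = B i - A i := by field_simp
    · have hAi : A i = 0 := hAzero i (le_of_not_gt hir)
      have hdi : d i = 0 := by rw [hd]; simp [hir]
      rw [hAi, hdi]
      have := hB0 i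
      linarith
  -- sum of slack terms is zero
  have hslack : ∀ i ∈ range n, B i - A i - A i * d i = 0 := by
    have hsle : ∑ i ∈ range n, (B i - A i - A i * d i) ≤ 0 := by
      have : ∑ i ∈ range n, (B i - A i - A i * d i)
          = (∑ i ∈ range n, B i - ∑ i ∈ range n, A i) - ∑ i ∈ range n, A i * d i := by
        rw [Finset.sum_sub_distrib, Finset.sum_sub_distrib]
      rw [this, ← hEq]
      linarith
    have hnn : ∀ i ∈ range n, 0 ≤ B i - A i - A i * d i := by
      intro i hi
      have := hterm i (Finset.mem_range.mp hi)
      linarith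
    have hz : ∑ i ∈ range n, (B i - A i - A i * d i) = 0 :=
      le_antisymm hsle (Finset.sum_nonneg hnn)
    exact (Finset.sum_eq_zero_iff_of_nonneg hnn).mp hz
  -- conclude
  intro i
  by_cases hi : i < n
  · have heq := hslack i (Finset.mem_range.mpr hi)
    by_cases hir : i < r
    · have hAi := hApos i hir
      have hBi := hBpos i hir
      have hdi : d i = Real.log (B i / A i) := by
        rw [hd]; simp only [hir, if_true]
        rw [Real.log_div (ne_of_gt hBi) (ne_of_gt hAi)]
      rw [hdi] at heq
      -- B i - A i = A i * log (B i / A i)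
      by_contra hne
      have hdivne : B i / A i ≠ 1 := by
        intro h
        exact hne (by field_simp at h; linarith)
      have hlt : Real.log (B i / A i) < B i / A i - 1 :=
        Real.log_lt_sub_one_of_pos (div_pos hBi hAi) hdivne
      have := mul_lt_mul_of_pos_left hlt hAi
      have hexp : A i * (B i / A i - 1) = B i - A i := by field_simp
      rw [hexp] at this
      linarith
    · have hAi : A i = 0 := hAzero i (le_of_not_gt hir)
      have hdi : d i = 0 := by rw [hd]; simp [hir]
      rw [hAi, hdi] at heq
      rw [hAi]
      linarith
  · rw [hAtop i (le_of_not_gt hi), hBtop i (le_of_not_gt hi)]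

theorem logMaj_and_maj_imp_perm {n : ℕ} (a b : Fin n → ℝ)
    (ha0 : ∀ i, 0 ≤ a i) (hb0 : ∀ i, 0 ≤ b i) (ha : Antitone a) (hb : Antitone b)
    (hlog : ∀ k : Fin n, partialProd a k ≤ partialProd b k)
    (hlogEq : ∏ i, a i = ∏ i, b i)
    (hmaj : ∀ k : Fin n, partialSum a k ≤ partialSum b k)
    (hmajEq : ∑ i, a i = ∑ i, b i) :
    ∃ e : Equiv.Perm (Fin n), a = b ∘ e := by
  classical
  set A : ℕ → ℝ := fun k => if h : k < n then a ⟨k, h⟩ else 0 with hA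
  set B : ℕ → ℝ := fun k => if h : k < n then b ⟨k, h⟩ else 0 with hB
  have hAval : ∀ i : Fin n, A i.1 = a i := by
    intro i; simp [hA, i.isLt]
  have hBval : ∀ i : Fin n, B i.1 = b i := by
    intro i; simp [hB, i.isLt]
  have hA0 : ∀ i, 0 ≤ A i := by
    intro i; by_cases h : i < n <;> simp [hA, h, ha0]
  have hB0 : ∀ i, 0 ≤ B i := by
    intro i; by_cases h : i < n <;> simp [hB, h, hb0]
  have hAtop : ∀ k, n ≤ k → A k = 0 := by
    intro k hk; simp [hA, Nat.not_lt.mpr hk]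
  have hBtop : ∀ k, n ≤ k → B k = 0 := by
    intro k hk; simp [hB, Nat.not_lt.mpr hk]
  have hAanti : ∀ j k : ℕ, j ≤ k → A k ≤ A j := by
    intro j k hjk
    by_cases hk : k < n
    · have hj : j < n := lt_of_le_of_lt hjk hk
      simp only [hA, dif_pos hk, dif_pos hj]
      exact ha (show (⟨j, hj⟩ : Fin n) ≤ ⟨k, hk⟩ from hjk)
    · rw [hAtop k (le_of_not_gt hk)]
      exact hA0 j
  -- sum conversion
  have hfilr : ∀ k : Fin n, (range n).filter (fun j => j ≤ k.1) = range (k.1 + 1) := by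
    intro k
    ext j
    simp only [Finset.mem_filter, Finset.mem_range]
    have := k.isLt
    omega
  have hsum : ∀ (c : Fin n → ℝ) (C : ℕ → ℝ), (∀ i : Fin n, C i.1 = c i) →
      ∀ k : Fin n, partialSum c k = ∑ i ∈ range (k.1 + 1), C i := by
    intro c C hval k
    calc partialSum c k = ∑ i : Fin n, if i ≤ k then c i else 0 := by
          rw [partialSum, Finset.sum_filter]
      _ = ∑ i : Fin n, (fun j => if j ≤ k.1 then C j else 0) i.1 := by
          refine Finset.sum_congr rfl fun i _ => ?_
          by_cases h : i ≤ k
          · simp only [if_pos h, if_pos (Fin.le_def.mp h)]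
            exact (hval i).symm
          · simp only [if_neg h, if_neg (fun hh => h (Fin.le_def.mpr hh))]
      _ = ∑ i ∈ range n, (if i ≤ k.1 then C i else 0) :=
          by exact Fin.sum_univ_eq_sum_range (fun j => if j ≤ k.1 then C j else 0) n
      _ = ∑ i ∈ (range n).filter (fun j => j ≤ k.1), C i := (Finset.sum_filter _ _).symm
      _ = ∑ i ∈ range (k.1 + 1), C i := by rw [hfilr k]
  have hprod : ∀ (c : Fin n → ℝ) (C : ℕ → ℝ), (∀ i : Fin n, C i.1 = c i) →
      ∀ k : Fin n, partialProd c k = ∏ i ∈ range (k.1 + 1), C i := by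
    intro c C hval k
    calc partialProd c k = ∏ i : Fin n, if i ≤ k then c i else 1 := by
          rw [partialProd, Finset.prod_filter]
      _ = ∏ i : Fin n, (fun j => if j ≤ k.1 then C j else 1) i.1 := by
          refine Finset.prod_congr rfl fun i _ => ?_
          by_cases h : i ≤ k
          · simp only [if_pos h, if_pos (Fin.le_def.mp h)]
            exact (hval i).symm
          · simp only [if_neg h, if_neg (fun hh => h (Fin.le_def.mpr hh))]
      _ = ∏ i ∈ range n, (if i ≤ k.1 then C i else 1) :=
          by exact Fin.prod_univ_eq_prod_range (fun j => if j ≤ k.1 then C j else 1) n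
      _ = ∏ i ∈ (range n).filter (fun j => j ≤ k.1), C i := (Finset.prod_filter _ _).symm
      _ = ∏ i ∈ range (k.1 + 1), C i := by rw [hfilr k]
  have htotsum : ∀ (c : Fin n → ℝ) (C : ℕ → ℝ), (∀ i : Fin n, C i.1 = c i) →
      ∑ i, c i = ∑ i ∈ range n, C i := by
    intro c C hval
    rw [← Fin.sum_univ_eq_sum_range C n]
    exact Finset.sum_congr rfl fun i _ => (hval i).symm
  have hlogN : ∀ k, k < n → ∏ i ∈ range (k + 1), A i ≤ ∏ i ∈ range (k + 1), B i := by
    intro k hk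
    have := hlog ⟨k, hk⟩
    rwa [hprod a A hAval ⟨k, hk⟩, hprod b B hBval ⟨k, hk⟩] at this
  have hmajN : ∀ k, k < n → ∑ i ∈ range (k + 1), A i ≤ ∑ i ∈ range (k + 1), B i := by
    intro k hk
    have := hmaj ⟨k, hk⟩
    rwa [hsum a A hAval ⟨k, hk⟩, hsum b B hBval ⟨k, hk⟩] at this
  have hEqN : ∑ i ∈ range n, A i = ∑ i ∈ range n, B i := by
    rw [← htotsum a A hAval, ← htotsum b B hBval]
    exact hmajEq
  have hmain : ∀ i, A i = B i :=
    aux_eq_of_maj n A B hA0 hB0 hAanti hlogN hmajN hEqN hAtop hBtop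
  have hab : a = b := by
    funext i
    have := hmain i.1
    rwa [hAval i, hBval i] at this
  exact ⟨Equiv.refl _, by funext i; simp [hab]⟩
end

section
/- For self-adjoint n×n complex matrices A and B with AB + BA = 0 and 1 ≤ p ≤ 2, one has ‖A+B‖_p^p + ‖A−B‖_p^p ≥ ‖σ(A)+σ(B)‖_p^p + ‖σ(A)−σ(B)‖_p^p, where σ(X) denotes the vector of singular values in decreasing order and the norms on vectors are ℓ^p norms. -/
open Matrix Finset
open scoped ComplexOrder

section AuxScalar

lemma concave_exchange {g : ℝ → ℝ} (hg : ConcaveOn ℝ (Set.Ici 0) g) {a a' b b' : ℝ}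
    (ha' : 0 ≤ a') (hb' : 0 ≤ b') (ha : a' ≤ a) (hb : b' ≤ b) :
    g (a + b) + g (a' + b') ≤ g (a + b') + g (a' + b) := by
  rcases le_or_gt (a + b) (a' + b') with h | h
  · have h1 : a = a' := by linarith
    have h2 : b = b' := by linarith
    rw [h1, h2]
  · have hden : 0 < a + b - (a' + b') := by linarith
    set μ := (b - b') / (a + b - (a' + b')) with hμ
    have hμ0 : 0 ≤ μ := div_nonneg (by linarith) hden.le
    have hμ1 : 0 ≤ 1 - μ := by
      rw [hμ, sub_nonneg, div_le_one hden]
      linarith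
    have hmemlo : (a' + b') ∈ Set.Ici (0:ℝ) := by simp; linarith
    have hmemhi : (a + b) ∈ Set.Ici (0:ℝ) := by simp; linarith
    have e1 : μ • (a' + b') + (1 - μ) • (a + b) = a + b' := by
      simp only [smul_eq_mul, hμ]
      field_simp
      ring
    have e2 : (1 - μ) • (a' + b') + μ • (a + b) = a' + b := by
      simp only [smul_eq_mul, hμ]
      field_simp
      ring
    have j1 := hg.2 hmemlo hmemhi hμ0 hμ1 (by ring)
    have j2 := hg.2 hmemlo hmemhi hμ1 hμ0 (by ring)
    rw [e1] at j1
    rw [e2] at j2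
    simp only [smul_eq_mul] at j1 j2
    linarith

lemma sqrt_rpow_eq {p t : ℝ} (ht : 0 ≤ t) : Real.sqrt t ^ p = t ^ (p / 2) := by
  rw [Real.sqrt_eq_rpow, ← Real.rpow_mul ht]
  congr 1
  ring

lemma f_exchange {p : ℝ} (hp1 : 1 ≤ p) (hp2 : p ≤ 2) {a a' b b' : ℝ}
    (ha' : 0 ≤ a') (hb' : 0 ≤ b') (ha : a' ≤ a) (hb : b' ≤ b) :
    Real.sqrt (a + b) ^ p + Real.sqrt (a' + b') ^ p
      ≤ Real.sqrt (a + b') ^ p + Real.sqrt (a' + b) ^ p := by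
  have hg : ConcaveOn ℝ (Set.Ici 0) (fun t : ℝ => t ^ (p/2)) :=
    Real.concaveOn_rpow (by linarith) (by linarith)
  have key := concave_exchange hg ha' hb' ha hb
  rw [sqrt_rpow_eq (by linarith), sqrt_rpow_eq (by linarith), sqrt_rpow_eq (by linarith),
    sqrt_rpow_eq (by linarith)]
  exact key

lemma clarkson {p : ℝ} (hp1 : 1 ≤ p) (hp2 : p ≤ 2) {α β : ℝ} (hα : 0 ≤ α) (hβ : 0 ≤ β) :
    |α + β| ^ p + |α - β| ^ p ≤ 2 * Real.sqrt (α ^ 2 + β ^ 2) ^ p := by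
  have hg : ConcaveOn ℝ (Set.Ici 0) (fun t : ℝ => t ^ (p/2)) :=
    Real.concaveOn_rpow (by linarith) (by linarith)
  have hj := hg.2 (Set.mem_Ici.mpr (sq_nonneg (α + β))) (Set.mem_Ici.mpr (sq_nonneg (α - β)))
    (by norm_num : (0:ℝ) ≤ 1/2) (by norm_num : (0:ℝ) ≤ 1/2) (by norm_num)
  simp only [smul_eq_mul] at hj
  have e0 : 1/2 * (α+β)^2 + 1/2 * (α-β)^2 = α^2 + β^2 := by ring
  rw [e0] at hj
  have habs : ∀ s : ℝ, (s^2 : ℝ) ^ (p/2) = |s| ^ p := by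
    intro s
    rw [← sq_abs, ← Real.rpow_natCast |s| 2, ← Real.rpow_mul (abs_nonneg s)]
    congr 1
    ring
  have h1 : ((α+β)^2 : ℝ) ^ (p/2) = |α+β| ^ p := habs _
  have h2 : ((α-β)^2 : ℝ) ^ (p/2) = |α-β| ^ p := habs _
  have h3 : (α^2+β^2 : ℝ) ^ (p/2) = Real.sqrt (α^2+β^2) ^ p :=
    (sqrt_rpow_eq (by positivity)).symm
  rw [h1, h2, h3] at hj
  linarith
end AuxScalar

section AuxRearr

open Equiv Equiv.Perm Finset Function



theorem sum_F_comp_perm_le_sum_F {ι : Type*} {F : ℝ → ℝ → ℝ}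
    (hF : ∀ ⦃a a' b b' : ℝ⦄, 0 ≤ a' → 0 ≤ b' → a' ≤ a → b' ≤ b →
      F a b' + F a' b ≤ F a b + F a' b')
    {s : Finset ι} {σ : Equiv.Perm ι} {f g : ι → ℝ} (hf : ∀ i, 0 ≤ f i) (hg : ∀ i, 0 ≤ g i)
    (hfg : MonovaryOn f g s) (hσ : {x | σ x ≠ x} ⊆ s) :
    ∑ i ∈ s, F (f i) (g (σ i)) ≤ ∑ i ∈ s, F (f i) (g i) := by
  classical
  revert hσ σ hfg
  apply Finset.induction_on_max_value (fun i ↦ toLex (g i, f i))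
    (motive := fun t ↦ ∀ {σ : Equiv.Perm ι}, MonovaryOn f g t → {x | σ x ≠ x} ⊆ t →
      ∑ i ∈ t, F (f i) (g (σ i)) ≤ ∑ i ∈ t, F (f i) (g i)) s
  · simp only [le_rfl, Finset.sum_empty, imp_true_iff]
  intro a s has hamax hind σ hfg hσ
  set τ : Equiv.Perm ι := σ.trans (swap a (σ a)) with hτ
  have hτs : {x | τ x ≠ x} ⊆ s := by
    intro x hx
    simp only [τ, Ne, Set.mem_setOf_eq, Equiv.coe_trans, Equiv.swap_comp_apply] at hx
    split_ifs at hx with h₁ h₂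
    · obtain rfl | hax := eq_or_ne x a
      · contradiction
      · exact mem_of_mem_insert_of_ne (hσ fun h ↦ hax <| h.symm.trans h₁) hax
    · exact (hx <| σ.injective h₂.symm).elim
    · exact mem_of_mem_insert_of_ne (hσ hx) (ne_of_apply_ne _ h₂)
  specialize hind (hfg.subset <| subset_insert _ _) hτs
  simp_rw [sum_insert has]
  refine le_trans ?_ (add_le_add_right hind _)
  obtain hσa | hσa := eq_or_ne a (σ a)
  · rw [hτ, ← hσa, swap_self, trans_refl]
  have h1s : σ⁻¹ a ∈ s := by
    rw [Ne, ← inv_eq_iff_eq] at hσa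
    refine mem_of_mem_insert_of_ne (hσ fun h ↦ hσa ?_) hσa
    rwa [(show ∀ x, σ (σ⁻¹ x) = x from fun x => σ.apply_symm_apply x), eq_comm] at h
  simp only [← s.sum_erase_add _ h1s, add_comm]
  rw [← add_assoc, ← add_assoc]
  simp only [hτ, swap_apply_left, Function.comp_apply, Equiv.coe_trans, (show ∀ x, σ (σ⁻¹ x) = x from fun x => σ.apply_symm_apply x)]
  refine add_le_add ?_ (sum_congr rfl fun x hx ↦ ?_).le
  · have hfa : f (σ⁻¹ a) ≤ f a := by
      specialize hamax (σ⁻¹ a) h1s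
      rw [Prod.Lex.le_iff] at hamax
      cases' hamax with hamax hamax
      · exact hfg (mem_insert_of_mem h1s) (mem_insert_self _ _) hamax
      · exact hamax.2
    have hga : g (σ a) ≤ g a := by
      specialize hamax (σ a) (mem_of_mem_insert_of_ne (hσ <| σ.injective.ne hσa.symm) hσa.symm)
      rw [Prod.Lex.le_iff] at hamax
      cases' hamax with hamax hamax
      · exact hamax.le
      · exact hamax.1.le
    have := hF (hf (σ⁻¹ a)) (hg (σ a)) hfa hga
    linarith
  · congr 2
    rw [mem_erase] at hx
    rw [swap_apply_of_ne_of_ne]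
    · exact fun h => hx.1 (by rw [← h]; simp)
    · exact fun h => has (σ.injective h ▸ hx.2)
end AuxRearr

section AuxMatrix

open Polynomial Module.End Submodule

variable {n : ℕ}

lemma eigenvalues_congr {M N : Matrix (Fin n) (Fin n) ℂ} (hM : M.IsHermitian)
    (hN : N.IsHermitian) (h : M = N) : hM.eigenvalues = hN.eigenvalues := by
  subst h; rfl



lemma count_fiber {α : Type*} [DecidableEq α] (h : Fin n → α) (c : α) :
    Multiset.count c (Multiset.map h Finset.univ.val) = Fintype.card {i // h i = c} := by
  rw [Multiset.count_map, Fintype.card_subtype, Finset.card, Finset.filter]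
  simp only [eq_comm]

lemma exists_perm_comp_eq {α : Type*} [DecidableEq α] {f g : Fin n → α}
    (h : Multiset.map f Finset.univ.val = Multiset.map g Finset.univ.val) :
    ∃ σ : Equiv.Perm (Fin n), f ∘ σ = g := by
  have hcard : ∀ c, Fintype.card {i // g i = c} = Fintype.card {i // f i = c} := by
    intro c
    rw [← count_fiber, ← count_fiber, h]
  exact ⟨Equiv.ofFiberEquiv (fun c => Fintype.equivOfCardEq (hcard c)),
    funext fun i => Equiv.ofFiberEquiv_map _ i⟩

lemma charpoly_unitary_conj (U : Matrix.unitaryGroup (Fin n) ℂ) (M : Matrix (Fin n) (Fin n) ℂ) :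
    ((U : Matrix (Fin n) (Fin n) ℂ) * M * (star U : Matrix.unitaryGroup (Fin n) ℂ)).charpoly
      = M.charpoly := by
  have hstar : ((star U : Matrix.unitaryGroup (Fin n) ℂ) : Matrix (Fin n) (Fin n) ℂ)
      = star (U : Matrix (Fin n) (Fin n) ℂ) := rfl
  rw [hstar]
  set V : Matrix (Fin n) (Fin n) ℂ := (U : Matrix (Fin n) (Fin n) ℂ) with hV
  have hUV : V * star V = 1 := (Matrix.mem_unitaryGroup_iff).mp U.2
  have hUV2 : star V * V = 1 := (Matrix.mem_unitaryGroup_iff').mp U.2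
  have hscal : V.map C * (Matrix.scalar (Fin n)) (X : ℂ[X]) * (star V).map C
      = (Matrix.scalar (Fin n)) (X : ℂ[X]) := by
    rw [(scalar_commute (X : ℂ[X]) (fun r => Commute.all _ _) (V.map C)).eq.symm, mul_assoc,
      ← Matrix.map_mul, hUV]
    simp
  have h1 : charmatrix (V * M * star V)
      = V.map C * charmatrix M * (star V).map C := by
    rw [charmatrix, charmatrix]
    simp only [RingHom.mapMatrix_apply]
    rw [mul_sub, sub_mul, hscal, ← Matrix.map_mul, ← Matrix.map_mul]
  unfold Matrix.charpoly
  rw [h1, det_mul, det_mul, mul_comm, ← mul_assoc, ← det_mul, ← Matrix.map_mul, hUV2]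
  simp

lemma charpoly_diagonal (d : Fin n → ℂ) :
    (Matrix.diagonal d).charpoly = ∏ i, (X - C (d i)) := by
  have h : charmatrix (Matrix.diagonal d) = Matrix.diagonal (fun i => X - C (d i)) := by
    ext i j
    rcases eq_or_ne i j with rfl | hij
    · simp [charmatrix_apply_eq]
    · simp [charmatrix_apply_ne _ _ _ hij, Matrix.diagonal_apply_ne _ hij]
  rw [Matrix.charpoly, h, det_diagonal]



lemma unitary_conj_of_eigenbasis {M : Matrix (Fin n) (Fin n) ℂ}
    (w : OrthonormalBasis (Fin n) ℂ (EuclideanSpace ℂ (Fin n))) (d : Fin n → ℂ)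
    (hw : ∀ j, M *ᵥ ⇑(w j) = d j • ⇑(w j)) :
    M = (⟨(EuclideanSpace.basisFun (Fin n) ℂ).toBasis.toMatrix w.toBasis,
          (EuclideanSpace.basisFun (Fin n) ℂ).toMatrix_orthonormalBasis_mem_unitary w⟩ :
            Matrix.unitaryGroup (Fin n) ℂ) * Matrix.diagonal d *
        star (⟨(EuclideanSpace.basisFun (Fin n) ℂ).toBasis.toMatrix w.toBasis,
          (EuclideanSpace.basisFun (Fin n) ℂ).toMatrix_orthonormalBasis_mem_unitary w⟩ :
            Matrix.unitaryGroup (Fin n) ℂ) := by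
  set W : Matrix (Fin n) (Fin n) ℂ := (EuclideanSpace.basisFun (Fin n) ℂ).toBasis.toMatrix
    w.toBasis with hWdef
  have hWapp : ∀ i j, W i j = w j i := fun i j => rfl
  have hkey : M * W = W * Matrix.diagonal d := by
    ext i j
    show ∑ k, M i k * W k j = ∑ k, W i k * Matrix.diagonal d k j
    have hR : (∑ k, W i k * Matrix.diagonal d k j) = w j i * d j := by
      rw [Finset.sum_eq_single j]
      · simp [hWapp]
      · intro b _ hb
        simp [Matrix.diagonal_apply_ne _ hb]
      · simp
    rw [hR]
    calc ∑ k, M i k * W k j = (M *ᵥ ⇑(w j)) i := rfl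
    _ = (d j • ⇑(w j)) i := by rw [hw j]
    _ = w j i * d j := by simp [mul_comm]
  have hU : W * star W = 1 :=
    Matrix.mem_unitaryGroup_iff.mp ((EuclideanSpace.basisFun (Fin n) ℂ
      ).toMatrix_orthonormalBasis_mem_unitary w)
  calc M = M * (W * star W) := by rw [hU, mul_one]
  _ = (M * W) * star W := by rw [mul_assoc]
  _ = W * Matrix.diagonal d * star W := by rw [hkey]

set_option maxHeartbeats 2000000 in
open Module.End in
lemma exists_unitary_diag {P Q : Matrix (Fin n) (Fin n) ℂ}
    (hP : P.IsHermitian) (hQ : Q.IsHermitian) (hPQ : P * Q = Q * P) :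
    ∃ (U : Matrix.unitaryGroup (Fin n) ℂ) (a b : Fin n → ℝ),
      P = (U : Matrix (Fin n) (Fin n) ℂ) * Matrix.diagonal (Complex.ofReal ∘ a)
          * (star U : Matrix.unitaryGroup (Fin n) ℂ) ∧
      Q = (U : Matrix (Fin n) (Fin n) ℂ) * Matrix.diagonal (Complex.ofReal ∘ b)
          * (star U : Matrix.unitaryGroup (Fin n) ℂ) := by
  classical
  set P' := Matrix.toEuclideanLin P with hP'def
  set Q' := Matrix.toEuclideanLin Q with hQ'def
  have hPsym : P'.IsSymmetric := isHermitian_iff_isSymmetric.mp hP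
  have hQsym : Q'.IsSymmetric := isHermitian_iff_isSymmetric.mp hQ
  have hmul : ∀ (M N : Matrix (Fin n) (Fin n) ℂ),
      Matrix.toEuclideanLin (M * N)
        = (Matrix.toEuclideanLin M).comp (Matrix.toEuclideanLin N) := by
    intro M N
    apply LinearMap.ext
    intro x
    simp [Matrix.toEuclideanLin_apply, Matrix.mulVec_mulVec]
  have hcomm : Commute P' Q' := by
    show P' * Q' = Q' * P'
    rw [Module.End.mul_eq_comp, Module.End.mul_eq_comp, hP'def, hQ'def, ← hmul, ← hmul, hPQ]
  set V : ℂ × ℂ → Submodule ℂ (EuclideanSpace ℂ (Fin n)) :=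
    fun μ => eigenspace P' μ.2 ⊓ eigenspace Q' μ.1 with hVdef
  have hInt : DirectSum.IsInternal V := hPsym.directSum_isInternal_of_commute hQsym hcomm
  have hOrth := hPsym.orthogonalFamily_eigenspace_inf_eigenspace hQsym
  have hInt' : DirectSum.IsInternal (fun i : {i // V i ≠ ⊥} => V i) :=
    (DirectSum.isInternal_ne_bot_iff).mpr hInt
  have hfin : {i | V i ≠ ⊥}.Finite :=
    Submodule.finite_ne_bot_of_iSupIndep hInt.submodule_iSupIndep
  haveI : Fintype {i // V i ≠ ⊥} := hfin.fintype
  have hOrth' := hOrth.comp (f := (Subtype.val : {i // V i ≠ ⊥} → ℂ × ℂ)) Subtype.val_injective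
  have hn : Module.finrank ℂ (EuclideanSpace ℂ (Fin n)) = n := by
    simp [finrank_euclideanSpace]
  set w := hInt'.subordinateOrthonormalBasis hn hOrth' with hwdef
  set μ : Fin n → {i // V i ≠ ⊥} :=
    fun k => hInt'.subordinateOrthonormalBasisIndex hn k hOrth' with hμdef
  have hmem : ∀ k, w k ∈ V (μ k) :=
    fun k => hInt'.subordinateOrthonormalBasis_subordinate hn k hOrth'
  have hPk : ∀ k, P' (w k) = (μ k).1.2 • w k := fun k => mem_eigenspace_iff.mp (hmem k).1
  have hQk : ∀ k, Q' (w k) = (μ k).1.1 • w k := fun k => mem_eigenspace_iff.mp (hmem k).2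
  have hreal2 : ∀ k, ((((μ k).1.2).re : ℂ)) = (μ k).1.2 := fun k =>
    Complex.conj_eq_iff_re.mp (hPsym.conj_eigenvalue_eq_self
      (hasEigenvalue_of_hasEigenvector ⟨(hmem k).1, w.orthonormal.ne_zero k⟩))
  have hreal1 : ∀ k, ((((μ k).1.1).re : ℂ)) = (μ k).1.1 := fun k =>
    Complex.conj_eq_iff_re.mp (hQsym.conj_eigenvalue_eq_self
      (hasEigenvalue_of_hasEigenvector ⟨(hmem k).2, w.orthonormal.ne_zero k⟩))
  refine ⟨_, fun k => ((μ k).1.2).re, fun k => ((μ k).1.1).re,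
    unitary_conj_of_eigenbasis w _ ?_, unitary_conj_of_eigenbasis w _ ?_⟩
  · intro j
    have h1 := congrArg (WithLp.equiv 2 (Fin n → ℂ)) (hPk j)
    rw [show ((Complex.ofReal ∘ fun k => ((μ k).1.2).re) j) = (μ j).1.2 from by
      simp [hreal2 j]]
    exact h1
  · intro j
    have h1 := congrArg (WithLp.equiv 2 (Fin n → ℂ)) (hQk j)
    rw [show ((Complex.ofReal ∘ fun k => ((μ k).1.1).re) j) = (μ j).1.1 from by
      simp [hreal1 j]]
    exact h1

lemma eigenvalues_multiset_eq {M : Matrix (Fin n) (Fin n) ℂ} (hM : M.IsHermitian)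
    (U : Matrix.unitaryGroup (Fin n) ℂ) (d : Fin n → ℝ)
    (h : M = (U : Matrix (Fin n) (Fin n) ℂ) * Matrix.diagonal (Complex.ofReal ∘ d)
        * (star U : Matrix.unitaryGroup (Fin n) ℂ)) :
    Multiset.map hM.eigenvalues Finset.univ.val = Multiset.map d Finset.univ.val := by
  classical
  -- charpoly M two ways
  have h1 : M.charpoly = (Matrix.diagonal (Complex.ofReal ∘ d)).charpoly := by
    rw [h]; exact charpoly_unitary_conj U _
  have h2 : M.charpoly = (Matrix.diagonal (Complex.ofReal ∘ hM.eigenvalues)).charpoly := by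
    conv_lhs => rw [hM.spectral_theorem]
    exact charpoly_unitary_conj _ _
  have h3 : ∏ i, (X - C ((Complex.ofReal ∘ hM.eigenvalues) i))
      = ∏ i, (X - C ((Complex.ofReal ∘ d) i)) := by
    rw [← charpoly_diagonal, ← charpoly_diagonal, ← h1, ← h2]
  -- pass to roots
  have key : Multiset.map (Complex.ofReal ∘ hM.eigenvalues) Finset.univ.val
      = Multiset.map (Complex.ofReal ∘ d) Finset.univ.val := by
    have r1 := congrArg Polynomial.roots h3
    rwa [Finset.prod_eq_multiset_prod, Finset.prod_eq_multiset_prod,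
      show (Multiset.map (fun i => X - C ((Complex.ofReal ∘ hM.eigenvalues) i)) Finset.univ.val)
        = Multiset.map (fun a => X - C a)
            (Multiset.map (Complex.ofReal ∘ hM.eigenvalues) Finset.univ.val) from
          by rw [Multiset.map_map]; rfl,
      show (Multiset.map (fun i => X - C ((Complex.ofReal ∘ d) i)) Finset.univ.val)
        = Multiset.map (fun a => X - C a)
            (Multiset.map (Complex.ofReal ∘ d) Finset.univ.val) from by rw [Multiset.map_map]; rfl,
      Polynomial.roots_multiset_prod_X_sub_C, Polynomial.roots_multiset_prod_X_sub_C] at r1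
  apply Multiset.map_injective (Complex.ofReal_injective)
  rwa [← Multiset.map_map, ← Multiset.map_map] at key

end AuxMatrix

/-- The singular values of a complex square matrix (in unspecified order). -/
noncomputable def sv {n : ℕ} (X : Matrix (Fin n) (Fin n) ℂ) : Fin n → ℝ :=
  fun i => Real.sqrt ((Matrix.posSemidef_conjTranspose_mul_self X).isHermitian.eigenvalues i)

/-- Singular values arranged in increasing order. -/
noncomputable def svAsc {n : ℕ} (X : Matrix (Fin n) (Fin n) ℂ) : Fin n → ℝ :=
  sv X ∘ Tuple.sort (sv X)

/-- Singular values arranged in decreasing order. -/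
noncomputable def svDesc {n : ℕ} (X : Matrix (Fin n) (Fin n) ℂ) : Fin n → ℝ :=
  fun i => svAsc X i.rev

/-- The p-th power of the p-Schatten norm: ‖X‖_p^p = ∑ σ_i(X)^p = Tr[(X*X)^{p/2}]. -/
noncomputable def schattenPow {n : ℕ} (p : ℝ) (X : Matrix (Fin n) (Fin n) ℂ) : ℝ :=
  ∑ i, sv X i ^ p

theorem anticommute_rearrangement_le_two {n : ℕ}
    (A B : Matrix (Fin n) (Fin n) ℂ) (hA : A.IsHermitian) (hB : B.IsHermitian)
    (hanti : A * B + B * A = 0) (p : ℝ) (hp1 : 1 ≤ p) (hp2 : p ≤ 2) :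
    (∑ i, |svDesc A i + svDesc B i| ^ p) + (∑ i, |svDesc A i - svDesc B i| ^ p) ≤
      schattenPow p (A + B) + schattenPow p (A - B) := by
  classical
  have hA' : Aᴴ = A := hA
  have hB' : Bᴴ = B := hB
  have hAB : A * B = -(B * A) := eq_neg_of_add_eq_zero_left hanti
  have hA2B : Commute A (B * B) := by
    show A * (B * B) = (B * B) * A
    calc A * (B * B) = (A * B) * B := (mul_assoc A B B).symm
    _ = (-(B * A)) * B := by rw [hAB]
    _ = -((B * A) * B) := neg_mul _ _
    _ = -(B * (A * B)) := by rw [mul_assoc]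
    _ = -(B * (-(B * A))) := by rw [hAB]
    _ = B * (B * A) := by rw [mul_neg, neg_neg]
    _ = (B * B) * A := (mul_assoc B B A).symm
  have hcomm2 : (Aᴴ * A) * (Bᴴ * B) = (Bᴴ * B) * (Aᴴ * A) := by
    rw [hA', hB']
    exact (hA2B.mul_left hA2B)
  have hPsd := Matrix.posSemidef_conjTranspose_mul_self A
  have hQsd := Matrix.posSemidef_conjTranspose_mul_self B
  have hZsd := Matrix.posSemidef_conjTranspose_mul_self (A + B)
  set x := hPsd.isHermitian.eigenvalues with hxdef
  set y := hQsd.isHermitian.eigenvalues with hydef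
  set z := hZsd.isHermitian.eigenvalues with hzdef
  have hplus : (A + B)ᴴ * (A + B) = Aᴴ * A + Bᴴ * B := by
    rw [conjTranspose_add, add_mul, mul_add, mul_add, hA', hB']
    rw [show A * A + A * B + (B * A + B * B) = A * A + B * B + (A * B + B * A) from by abel,
      hanti, add_zero]
  have hminus : (A - B)ᴴ * (A - B) = Aᴴ * A + Bᴴ * B := by
    rw [conjTranspose_sub, sub_mul, mul_sub, mul_sub, hA', hB']
    rw [show A * A - A * B - (B * A - B * B) = A * A + B * B - (A * B + B * A) from by abel,
      hanti, sub_zero]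
  obtain ⟨U, a, b, hPdiag, hQdiag⟩ :=
    exists_unitary_diag hPsd.isHermitian hQsd.isHermitian hcomm2
  have hZdiag : (A + B)ᴴ * (A + B)
      = (U : Matrix (Fin n) (Fin n) ℂ)
          * Matrix.diagonal (Complex.ofReal ∘ (fun i => a i + b i))
          * (star U : Matrix.unitaryGroup (Fin n) ℂ) := by
    have hd : Matrix.diagonal (Complex.ofReal ∘ (fun i => a i + b i))
        = Matrix.diagonal (Complex.ofReal ∘ a) + Matrix.diagonal (Complex.ofReal ∘ b) := by
      ext i j
      rcases eq_or_ne i j with rfl | hij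
      · simp
      · simp [Matrix.diagonal_apply_ne _ hij]
    rw [hplus, hPdiag, hQdiag, hd, Matrix.mul_add, Matrix.add_mul]
  have hma := eigenvalues_multiset_eq hPsd.isHermitian U a hPdiag
  have hmb := eigenvalues_multiset_eq hQsd.isHermitian U b hQdiag
  have hmz := eigenvalues_multiset_eq hZsd.isHermitian U (fun i => a i + b i) hZdiag
  obtain ⟨σ₁, hσ₁⟩ := exists_perm_comp_eq hma
  obtain ⟨σ₂, hσ₂⟩ := exists_perm_comp_eq hmb
  obtain ⟨σ₃, hσ₃⟩ := exists_perm_comp_eq hmz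
  have hx0 : ∀ i, 0 ≤ x i := hPsd.eigenvalues_nonneg
  have hy0 : ∀ i, 0 ≤ y i := hQsd.eigenvalues_nonneg
  -- singular value functions
  have hsvA : sv A = fun i => Real.sqrt (x i) := rfl
  have hsvB : sv B = fun i => Real.sqrt (y i) := rfl
  have hsvAB : sv (A + B) = fun i => Real.sqrt (z i) := rfl
  have hzz' : (Matrix.posSemidef_conjTranspose_mul_self (A - B)).isHermitian.eigenvalues = z :=
    eigenvalues_congr _ _ (by rw [hminus, ← hplus])
  have hsvAB' : sv (A - B) = fun i => Real.sqrt (z i) := by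
    funext i
    show Real.sqrt ((Matrix.posSemidef_conjTranspose_mul_self (A - B)).isHermitian.eigenvalues i)
      = Real.sqrt (z i)
    rw [hzz']
  -- RHS
  have hRHS : schattenPow p (A + B) + schattenPow p (A - B)
      = 2 * ∑ i, Real.sqrt (a i + b i) ^ p := by
    unfold schattenPow
    rw [show (∑ i, sv (A + B) i ^ p) = ∑ i, Real.sqrt (z i) ^ p from by rw [hsvAB],
      show (∑ i, sv (A - B) i ^ p) = ∑ i, Real.sqrt (z i) ^ p from by rw [hsvAB']]
    have hre : ∑ i, Real.sqrt (z i) ^ p = ∑ i, Real.sqrt (a i + b i) ^ p := by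
      rw [← Equiv.sum_comp σ₃ (fun i => Real.sqrt (z i) ^ p)]
      apply Finset.sum_congr rfl
      intro j _
      rw [show z (σ₃ j) = a j + b j from congrFun hσ₃ j]
    rw [hre]
    ring
  -- sorted squares
  set π₁ : Equiv.Perm (Fin n) := (Fin.revPerm).trans (Tuple.sort (sv A)) with hπ₁def
  set π₂ : Equiv.Perm (Fin n) := (Fin.revPerm).trans (Tuple.sort (sv B)) with hπ₂def
  have hπ₁ : ∀ i, svDesc A i = sv A (π₁ i) := fun i => rfl
  have hπ₂ : ∀ i, svDesc B i = sv B (π₂ i) := fun i => rfl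
  set u : Fin n → ℝ := fun i => svDesc A i ^ 2 with hudef
  set v : Fin n → ℝ := fun i => svDesc B i ^ 2 with hvdef
  have hu : ∀ i, u i = x (π₁ i) := by
    intro i
    show (svDesc A i) ^ 2 = x (π₁ i)
    rw [hπ₁ i, show sv A (π₁ i) = Real.sqrt (x (π₁ i)) from rfl]
    exact Real.sq_sqrt (hx0 _)
  have hv : ∀ i, v i = y (π₂ i) := by
    intro i
    show (svDesc B i) ^ 2 = y (π₂ i)
    rw [hπ₂ i, show sv B (π₂ i) = Real.sqrt (y (π₂ i)) from rfl]
    exact Real.sq_sqrt (hy0 _)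
  have hsvDescA0 : ∀ i, 0 ≤ svDesc A i := fun i => Real.sqrt_nonneg _
  have hsvDescB0 : ∀ i, 0 ≤ svDesc B i := fun i => Real.sqrt_nonneg _
  have hu0 : ∀ i, 0 ≤ u i := fun i => sq_nonneg _
  have hv0 : ∀ i, 0 ≤ v i := fun i => sq_nonneg _
  have hAntiA : Antitone (svDesc A) := by
    intro i j hij
    exact Tuple.monotone_sort (sv A) ((Fin.rev_le_rev).mpr hij)
  have hAntiB : Antitone (svDesc B) := by
    intro i j hij
    exact Tuple.monotone_sort (sv B) ((Fin.rev_le_rev).mpr hij)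
  have huAnti : Antitone u := by
    intro i j hij
    exact pow_le_pow_left₀ (hsvDescA0 _) (hAntiA hij) 2
  have hvAnti : Antitone v := by
    intro i j hij
    exact pow_le_pow_left₀ (hsvDescB0 _) (hAntiB hij) 2
  have hmono : MonovaryOn u v (Finset.univ : Finset (Fin n)) := by
    intro i _ j _ hlt
    have hji : j ≤ i := by
      by_contra hc
      exact absurd (hvAnti (le_of_not_ge hc)) (not_le.mpr hlt)
    exact huAnti hji
  -- connect the two pairings
  set ρ : Equiv.Perm (Fin n) := π₁.trans (σ₁.symm.trans (σ₂.trans π₂.symm)) with hρdef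
  set e : Equiv.Perm (Fin n) := π₁.trans σ₁.symm with hedef
  have hsum_ab : ∑ i, Real.sqrt (a i + b i) ^ p = ∑ j, Real.sqrt (u j + v (ρ j)) ^ p := by
    rw [← Equiv.sum_comp e (fun i => Real.sqrt (a i + b i) ^ p)]
    apply Finset.sum_congr rfl
    intro j _
    have h1 : a (e j) = u j := by
      rw [← congrFun hσ₁ (e j)]
      show x (σ₁ (σ₁.symm (π₁ j))) = u j
      rw [Equiv.apply_symm_apply, hu j]
    have h2 : b (e j) = v (ρ j) := by
      rw [← congrFun hσ₂ (e j), hv (ρ j)]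
      show y (σ₂ (σ₁.symm (π₁ j))) = y (π₂ (π₂.symm (σ₂ (σ₁.symm (π₁ j)))))
      rw [Equiv.apply_symm_apply]
    rw [h1, h2]
  -- rearrangement
  have hF : ∀ ⦃α α' β β' : ℝ⦄, 0 ≤ α' → 0 ≤ β' → α' ≤ α → β' ≤ β →
      (fun s t => -(Real.sqrt (s + t) ^ p)) α β' + (fun s t => -(Real.sqrt (s + t) ^ p)) α' β
        ≤ (fun s t => -(Real.sqrt (s + t) ^ p)) α β
            + (fun s t => -(Real.sqrt (s + t) ^ p)) α' β' := by
    intro α α' β β' hα' hβ' hα hβ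
    have := f_exchange hp1 hp2 hα' hβ' hα hβ
    simp only
    linarith
  have hkey := sum_F_comp_perm_le_sum_F (F := fun s t => -(Real.sqrt (s + t) ^ p)) hF hu0 hv0
    hmono (σ := ρ) (by intro w _; exact Finset.mem_coe.mpr (Finset.mem_univ w))
  have hre2 : ∑ i, Real.sqrt (u i + v i) ^ p ≤ ∑ i, Real.sqrt (u i + v (ρ i)) ^ p := by
    have h2 : -(∑ i, Real.sqrt (u i + v (ρ i)) ^ p) ≤ -(∑ i, Real.sqrt (u i + v i) ^ p) := by
      simpa [← Finset.sum_neg_distrib] using hkey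
    linarith
  -- LHS
  have hLHS : (∑ i, |svDesc A i + svDesc B i| ^ p) + (∑ i, |svDesc A i - svDesc B i| ^ p)
      ≤ ∑ i, 2 * Real.sqrt (u i + v i) ^ p := by
    rw [← Finset.sum_add_distrib]
    apply Finset.sum_le_sum
    intro i _
    have hc := clarkson hp1 hp2 (hsvDescA0 i) (hsvDescB0 i)
    exact hc
  calc (∑ i, |svDesc A i + svDesc B i| ^ p) + (∑ i, |svDesc A i - svDesc B i| ^ p)
      ≤ ∑ i, 2 * Real.sqrt (u i + v i) ^ p := hLHS
  _ = 2 * ∑ i, Real.sqrt (u i + v i) ^ p := by rw [Finset.mul_sum]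
  _ ≤ 2 * ∑ i, Real.sqrt (u i + v (ρ i)) ^ p := by linarith [hre2]
  _ = 2 * ∑ i, Real.sqrt (a i + b i) ^ p := by rw [← hsum_ab]
  _ = schattenPow p (A + B) + schattenPow p (A - B) := hRHS.symm
end

section
/- For any two unitary n×n complex matrices U and V and 1 ≤ p ≤ 2, ‖U+V‖_p^p + ‖U−V‖_p^p ≥ 2^p · n, with the inequality reversing for p ≥ 2. -/
open Matrix Finset
open scoped ComplexOrder

section Aux

open Polynomial

lemma charpoly_diagonal_eq {n : ℕ} (d : Fin n → ℂ) :
    (Matrix.diagonal d).charpoly = ∏ i, (X - C (d i)) := by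
  have h : charmatrix (Matrix.diagonal d) =
      Matrix.diagonal (fun i => (X : ℂ[X]) - C (d i)) := by
    ext i j
    by_cases hij : i = j
    · subst hij; simp [charmatrix_apply_eq]
    · simp [charmatrix_apply_ne _ _ _ hij, Matrix.diagonal_apply_ne _ hij]
  rw [Matrix.charpoly, h, Matrix.det_diagonal]

lemma charpoly_conj_unitary {n : ℕ} (W M : Matrix (Fin n) (Fin n) ℂ)
    (h1 : W * star W = 1) :
    (W * M * star W).charpoly = M.charpoly := by
  set f := (C : ℂ →+* ℂ[X])
  have hWW : W.map f * (star W).map f = 1 := by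
    rw [← Matrix.map_mul, h1, Matrix.map_one f (map_zero f) (map_one f)]
  have hmap : charmatrix (W * M * star W) =
      W.map f * charmatrix M * (star W).map f := by
    have hscalar : W.map f * Matrix.scalar (Fin n) (X : ℂ[X]) * (star W).map f
        = Matrix.scalar (Fin n) (X : ℂ[X]) := by
      rw [mul_assoc, Matrix.scalar_commute (X : ℂ[X]) (fun r => Commute.all _ r) _, ← mul_assoc,
        hWW, one_mul]
    simp only [charmatrix, RingHom.mapMatrix_apply]
    rw [mul_sub, sub_mul, hscalar, ← Matrix.map_mul, ← Matrix.map_mul]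
  rw [Matrix.charpoly, Matrix.charpoly, hmap, Matrix.det_mul, Matrix.det_mul]
  have hdd : (W.map f).det * ((star W).map f).det = 1 := by
    rw [← Matrix.det_mul, hWW, Matrix.det_one]
  calc (W.map f).det * (charmatrix M).det * ((star W).map f).det
      = (charmatrix M).det * ((W.map f).det * ((star W).map f).det) := by ring
    _ = (charmatrix M).det := by rw [hdd, mul_one]

lemma eig_multiset_eq {n : ℕ} {B : Matrix (Fin n) (Fin n) ℂ} (hB : B.IsHermitian)
    (W : Matrix (Fin n) (Fin n) ℂ) (hW : W ∈ Matrix.unitaryGroup (Fin n) ℂ)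
    (d : Fin n → ℝ) (hBd : B = W * Matrix.diagonal (Complex.ofReal ∘ d) * star W) :
    Multiset.map hB.eigenvalues Finset.univ.val = Multiset.map d Finset.univ.val := by
  have hprod : ∀ g : Fin n → ℝ,
      (∏ i, (X - C ((g i : ℂ)))) =
      ((Multiset.map (fun i => ((g i : ℝ) : ℂ)) Finset.univ.val).map
        (fun a : ℂ => X - C a)).prod := by
    intro g
    rw [Multiset.map_map, Finset.prod_eq_multiset_prod]
    rfl
  have h1 : B.charpoly = ∏ i, (X - C ((d i : ℂ))) := by
    rw [hBd, charpoly_conj_unitary _ _ (Matrix.mem_unitaryGroup_iff.mp hW),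
      charpoly_diagonal_eq]
    rfl
  have h2 : B.charpoly = ∏ i, (X - C ((hB.eigenvalues i : ℂ))) := by
    conv_lhs => rw [hB.spectral_theorem]
    rw [Unitary.conjStarAlgAut_apply]
    rw [charpoly_conj_unitary _ _
        (Matrix.mem_unitaryGroup_iff.mp (Matrix.IsHermitian.eigenvectorUnitary hB).2),
      charpoly_diagonal_eq]
    rfl
  have h3 : Multiset.map (fun i => ((hB.eigenvalues i : ℝ) : ℂ)) Finset.univ.val
      = Multiset.map (fun i => ((d i : ℝ) : ℂ)) Finset.univ.val := by
    have heq := h1 ▸ h2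
    rw [hprod, hprod] at heq
    have hr := congrArg Polynomial.roots heq
    rw [Polynomial.roots_multiset_prod_X_sub_C, Polynomial.roots_multiset_prod_X_sub_C] at hr
    exact hr.symm
  have h4 : Multiset.map (Complex.ofReal) (Multiset.map hB.eigenvalues Finset.univ.val)
      = Multiset.map (Complex.ofReal) (Multiset.map d Finset.univ.val) := by
    rw [Multiset.map_map, Multiset.map_map]
    exact h3
  exact Multiset.map_injective Complex.ofReal_injective h4

lemma sum_f_eig {n : ℕ} {B : Matrix (Fin n) (Fin n) ℂ} (hB : B.IsHermitian)
    (W : Matrix (Fin n) (Fin n) ℂ) (hW : W ∈ Matrix.unitaryGroup (Fin n) ℂ)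
    (d : Fin n → ℝ) (hBd : B = W * Matrix.diagonal (Complex.ofReal ∘ d) * star W)
    (f : ℝ → ℝ) :
    ∑ i, f (hB.eigenvalues i) = ∑ i, f (d i) := by
  have h := eig_multiset_eq hB W hW d hBd
  rw [Finset.sum_eq_multiset_sum, Finset.sum_eq_multiset_sum]
  have h5 : Multiset.map (fun i => f (hB.eigenvalues i)) Finset.univ.val
      = Multiset.map f (Multiset.map hB.eigenvalues Finset.univ.val) := by
    rw [Multiset.map_map]; rfl
  rw [h5, h, Multiset.map_map]
  rfl

lemma real_rpow_add_le {x y q : ℝ} (hx : 0 ≤ x) (hy : 0 ≤ y) (h0 : 0 ≤ q) (h1 : q ≤ 1) :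
    (x + y) ^ q ≤ x ^ q + y ^ q := by
  lift x to NNReal using hx
  lift y to NNReal using hy
  rw [← NNReal.coe_add, ← NNReal.coe_rpow, ← NNReal.coe_rpow, ← NNReal.coe_rpow,
    ← NNReal.coe_add, NNReal.coe_le_coe]
  exact NNReal.rpow_add_le_add_rpow x y h0 h1

lemma real_add_rpow_le {x y q : ℝ} (hx : 0 ≤ x) (hy : 0 ≤ y) (h1 : 1 ≤ q) :
    x ^ q + y ^ q ≤ (x + y) ^ q := by
  lift x to NNReal using hx
  lift y to NNReal using hy
  rw [← NNReal.coe_add, ← NNReal.coe_rpow, ← NNReal.coe_rpow, ← NNReal.coe_rpow,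
    ← NNReal.coe_add, NNReal.coe_le_coe]
  exact NNReal.add_rpow_le_rpow_add x y h1

lemma four_rpow_half (p : ℝ) : (4 : ℝ) ^ (p / 2) = 2 ^ p := by
  have h4 : (4 : ℝ) = 2 ^ (2 : ℝ) := by
    rw [show ((2:ℝ)^(2:ℝ)) = (2:ℝ)^(2:ℕ) by rw [← Real.rpow_natCast]; norm_num]
    norm_num
  rw [h4, ← Real.rpow_mul (by norm_num)]
  congr 1
  ring

lemma key_scalar {x y p : ℝ} (hx : 0 ≤ x) (hy : 0 ≤ y) (hxy : x + y = 4) :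
    (1 ≤ p → p ≤ 2 → (2:ℝ) ^ p ≤ x ^ (p/2) + y ^ (p/2)) ∧
    (2 ≤ p → x ^ (p/2) + y ^ (p/2) ≤ (2:ℝ) ^ p) := by
  constructor
  · intro hp1 hp2
    have h := real_rpow_add_le (q := p/2) hx hy (by linarith) (by linarith)
    rw [hxy, four_rpow_half] at h
    exact h
  · intro hp2
    have h := real_add_rpow_le (q := p/2) hx hy (by linarith)
    rw [hxy, four_rpow_half] at h
    exact h

end Aux

theorem unitary_schatten_bound {n : ℕ}
    (U V : Matrix (Fin n) (Fin n) ℂ)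
    (hU : U ∈ Matrix.unitaryGroup (Fin n) ℂ) (hV : V ∈ Matrix.unitaryGroup (Fin n) ℂ)
    (p : ℝ) :
    (1 ≤ p → p ≤ 2 →
      (2 : ℝ) ^ p * n ≤ schattenPow p (U + V) + schattenPow p (U - V)) ∧
    (2 ≤ p →
      schattenPow p (U + V) + schattenPow p (U - V) ≤ (2 : ℝ) ^ p * n) := by
  have hUu : (U)ᴴ * U = 1 := by
    have h := Matrix.mem_unitaryGroup_iff'.mp hU
    simpa [Matrix.star_eq_conjTranspose] using h
  have hVv : (V)ᴴ * V = 1 := by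
    have h := Matrix.mem_unitaryGroup_iff'.mp hV
    simpa [Matrix.star_eq_conjTranspose] using h
  have hA : ((U + V)ᴴ * (U + V)).PosSemidef := Matrix.posSemidef_conjTranspose_mul_self _
  have hB : ((U - V)ᴴ * (U - V)).PosSemidef := Matrix.posSemidef_conjTranspose_mul_self _
  set a := hA.isHermitian.eigenvalues with ha_def
  set d : Fin n → ℝ := fun i => 4 - a i with hd_def
  set W : Matrix (Fin n) (Fin n) ℂ :=
    (Matrix.IsHermitian.eigenvectorUnitary hA.isHermitian : Matrix (Fin n) (Fin n) ℂ) with hW_def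
  have hWmem : W ∈ Matrix.unitaryGroup (Fin n) ℂ :=
    (Matrix.IsHermitian.eigenvectorUnitary hA.isHermitian).2
  have hWW : W * star W = 1 := Matrix.mem_unitaryGroup_iff.mp hWmem
  have hAB : (U + V)ᴴ * (U + V) + (U - V)ᴴ * (U - V)
      = 1 + 1 + 1 + 1 := by
    simp only [conjTranspose_add, conjTranspose_sub, add_mul, sub_mul, mul_add, mul_sub,
      hUu, hVv]
    abel
  have hdiag4 : Matrix.diagonal (fun _ : Fin n => (4:ℂ)) = 1 + 1 + 1 + 1 := by
    rw [show (1 : Matrix (Fin n) (Fin n) ℂ) = Matrix.diagonal (fun _ => 1) from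
      (Matrix.diagonal_one).symm, Matrix.diagonal_add, Matrix.diagonal_add, Matrix.diagonal_add]
    norm_num
  have hBeq : (U - V)ᴴ * (U - V) = W * Matrix.diagonal (Complex.ofReal ∘ d) * star W := by
    have hd : Matrix.diagonal (Complex.ofReal ∘ d)
        = Matrix.diagonal (fun _ : Fin n => (4:ℂ)) - Matrix.diagonal (Complex.ofReal ∘ a) := by
      ext i j
      by_cases h : i = j <;> simp [h, hd_def, Complex.ofReal_sub]
    have hcomm : W * Matrix.diagonal (fun _ : Fin n => (4:ℂ))
        = Matrix.diagonal (fun _ : Fin n => (4:ℂ)) * W := by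
      ext i j
      simp [Matrix.mul_diagonal, Matrix.diagonal_mul, mul_comm]
    have h1 : W * Matrix.diagonal (fun _ : Fin n => (4:ℂ)) * star W
        = Matrix.diagonal (fun _ : Fin n => (4:ℂ)) := by
      rw [hcomm, mul_assoc, hWW, mul_one]
    have h2 : W * Matrix.diagonal (Complex.ofReal ∘ a) * star W = (U + V)ᴴ * (U + V) :=
      (hA.isHermitian.spectral_theorem).symm
    have h3 : W * (Matrix.diagonal (fun _ : Fin n => (4:ℂ))
        - Matrix.diagonal (Complex.ofReal ∘ a)) * star W
        = Matrix.diagonal (fun _ : Fin n => (4:ℂ)) - (U + V)ᴴ * (U + V) := by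
      rw [Matrix.mul_sub, Matrix.sub_mul, h1, h2]
    rw [hd, h3, hdiag4, ← hAB]
    abel
  have hd_nonneg : ∀ i, 0 ≤ d i := by
    intro i
    have hmem : d i ∈ Multiset.map d Finset.univ.val :=
      Multiset.mem_map_of_mem _ (Finset.mem_val.mpr (Finset.mem_univ i))
    rw [← eig_multiset_eq hB.isHermitian W hWmem d hBeq] at hmem
    obtain ⟨j, _, hj⟩ := Multiset.mem_map.mp hmem
    rw [← hj]
    exact hB.eigenvalues_nonneg j
  have ha_nonneg : ∀ i, 0 ≤ a i := fun i => hA.eigenvalues_nonneg i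
  have hsum : schattenPow p (U - V) = ∑ i, Real.sqrt (d i) ^ p := by
    exact sum_f_eig hB.isHermitian W hWmem d hBeq (fun t => Real.sqrt t ^ p)
  have hsumA : schattenPow p (U + V) = ∑ i, Real.sqrt (a i) ^ p := rfl
  have htotal : schattenPow p (U + V) + schattenPow p (U - V)
      = ∑ i, (a i ^ (p/2) + d i ^ (p/2)) := by
    rw [hsumA, hsum, ← Finset.sum_add_distrib]
    refine Finset.sum_congr rfl fun i _ => ?_
    rw [Real.rpow_div_two_eq_sqrt p (ha_nonneg i), Real.rpow_div_two_eq_sqrt p (hd_nonneg i)]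
  have hconst : (2 : ℝ) ^ p * n = ∑ _i : Fin n, (2:ℝ) ^ p := by
    rw [Finset.sum_const, Finset.card_univ, Fintype.card_fin, nsmul_eq_mul, mul_comm]
  have hxy : ∀ i, a i + d i = 4 := fun i => by simp [hd_def]
  constructor
  · intro hp1 hp2
    rw [htotal, hconst]
    exact Finset.sum_le_sum fun i _ =>
      (key_scalar (ha_nonneg i) (hd_nonneg i) (hxy i)).1 hp1 hp2
  · intro hp2
    rw [htotal, hconst]
    exact Finset.sum_le_sum fun i _ =>
      (key_scalar (ha_nonneg i) (hd_nonneg i) (hxy i)).2 hp2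
end

section
/- Let a, b ∈ ℝ^n be nonnegative vectors. For 1 ≤ p ≤ 2, over all permutations π, the quantity ∑_i (|a_i + b_{π(i)}|^p + |a_i − b_{π(i)}|^p) is minimized when a and b are similarly ordered (both decreasing) and maximized when oppositely ordered (a increasing, b decreasing); for p ≥ 2 the extremizers swap. -/
open Finset

section Helpers
open Set


lemma two_point_convex {s : Set ℝ} {f : ℝ → ℝ} (hf : ConvexOn ℝ s f) {a b c d : ℝ}
    (ha : a ∈ s) (hb : b ∈ s) (hac : a ≤ c) (hcb : c ≤ b) (had : a ≤ d) (hdb : d ≤ b)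
    (hsum : c + d = a + b) : f c + f d ≤ f a + f b := by
  rcases eq_or_lt_of_le (hac.trans hcb) with h | h
  · have hca : c = a := le_antisymm (h ▸ hcb) hac
    have hda : d = a := le_antisymm (h ▸ hdb) had
    rw [hca, hda, ← h]
  · have hba : 0 < b - a := by linarith
    set t : ℝ := (b - c) / (b - a) with ht
    have ht0 : 0 ≤ t := div_nonneg (by linarith) hba.le
    have ht1 : t ≤ 1 := by rw [ht, div_le_one hba]; linarith
    have e1 : t * a + (1 - t) * b = c := by rw [ht]; field_simp; ring
    have e2 : (1 - t) * a + t * b = d := by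
      have h' : (1 - t) * a + t * b = a + b - (t * a + (1 - t) * b) := by ring
      rw [h', e1]; linarith
    have h1 := hf.2 ha hb ht0 (by linarith : (0:ℝ) ≤ 1 - t) (by ring : t + (1 - t) = 1)
    have h2 := hf.2 ha hb (by linarith : (0:ℝ) ≤ 1 - t) ht0 (by ring : (1 - t) + t = 1)
    simp only [smul_eq_mul] at h1 h2
    rw [e1] at h1
    rw [e2] at h2
    linarith

lemma two_point_concave {s : Set ℝ} {f : ℝ → ℝ} (hf : ConcaveOn ℝ s f) {a b c d : ℝ}
    (ha : a ∈ s) (hb : b ∈ s) (hac : a ≤ c) (hcb : c ≤ b) (had : a ≤ d) (hdb : d ≤ b)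
    (hsum : c + d = a + b) : f a + f b ≤ f c + f d := by
  have := two_point_convex hf.neg ha hb hac hcb had hdb hsum
  simp only [Pi.neg_apply] at this
  linarith

lemma concaveOn_rpow' {q : ℝ} (hq0 : 0 < q) (hq1 : q ≤ 1) :
    ConcaveOn ℝ (Ici 0) fun z : ℝ => z ^ q := by
  rcases eq_or_lt_of_le hq1 with h | h
  · subst h; simp only [Real.rpow_one]; exact concaveOn_id (convex_Ici 0)
  · exact (Real.strictConcaveOn_rpow hq0 h).concaveOn

lemma rpow_subadd {q : ℝ} (hq0 : 0 < q) (hq1 : q ≤ 1) {u v : ℝ} (hu : 0 ≤ u) (hv : 0 ≤ v) :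
    (u + v) ^ q ≤ u ^ q + v ^ q := by
  have h := two_point_concave (concaveOn_rpow' hq0 hq1) (mem_Ici.2 le_rfl)
    (mem_Ici.2 (by linarith : (0:ℝ) ≤ u + v)) hu (by linarith) hv (by linarith) (by ring)
  rw [Real.zero_rpow hq0.ne'] at h
  linarith

lemma rpow_superadd {q : ℝ} (hq1 : 1 ≤ q) {u v : ℝ} (hu : 0 ≤ u) (hv : 0 ≤ v) :
    u ^ q + v ^ q ≤ (u + v) ^ q := by
  have h := two_point_convex (convexOn_rpow hq1) (mem_Ici.2 le_rfl)
    (mem_Ici.2 (by linarith : (0:ℝ) ≤ u + v)) hu (by linarith) hv (by linarith) (by ring)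
  rw [Real.zero_rpow (by linarith : (0:ℝ) < q).ne'] at h
  linarith


lemma hd_absP {c : ℝ} (p : ℝ) {t : ℝ} (h : 0 < c + t) :
    HasDerivAt (fun s => |c + s| ^ p) (p * (c + t) ^ (p - 1)) t := by
  have h1 : HasDerivAt (fun s : ℝ => c + s) 1 t := (hasDerivAt_id t).const_add c
  have h2 := h1.rpow_const (p := p) (Or.inl h.ne')
  have h3 : (fun s : ℝ => |c + s| ^ p) =ᶠ[nhds t] fun s => (c + s) ^ p := by
    have hm : Set.Ioi (-c) ∈ nhds t := Ioi_mem_nhds (by linarith)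
    filter_upwards [hm] with s hs
    rw [abs_of_pos (by simp only [Set.mem_Ioi] at hs; linarith : (0:ℝ) < c + s)]
  have := h2.congr_of_eventuallyEq h3
  simpa using this

lemma hd_absM_pos {c : ℝ} (p : ℝ) {t : ℝ} (h : t < c) :
    HasDerivAt (fun s => |c - s| ^ p) (-(p * (c - t) ^ (p - 1))) t := by
  have h1 : HasDerivAt (fun s : ℝ => c - s) (-1) t := (hasDerivAt_id t).const_sub c
  have h2 := h1.rpow_const (p := p) (Or.inl (sub_pos.2 h).ne')
  have h3 : (fun s : ℝ => |c - s| ^ p) =ᶠ[nhds t] fun s => (c - s) ^ p := by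
    have hm : Set.Iio c ∈ nhds t := Iio_mem_nhds h
    filter_upwards [hm] with s hs
    rw [abs_of_pos (by simp only [Set.mem_Iio] at hs; linarith : (0:ℝ) < c - s)]
  have := h2.congr_of_eventuallyEq h3
  rw [show -(p * (c - t) ^ (p - 1)) = -1 * p * (c - t) ^ (p - 1) by ring]
  exact this

lemma hd_absM_neg {c : ℝ} (p : ℝ) {t : ℝ} (h : c < t) :
    HasDerivAt (fun s => |c - s| ^ p) (p * (t - c) ^ (p - 1)) t := by
  have h1 : HasDerivAt (fun s : ℝ => s - c) 1 t := (hasDerivAt_id t).sub_const c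
  have h2 := h1.rpow_const (p := p) (Or.inl (sub_pos.2 h).ne')
  have h3 : (fun s : ℝ => |c - s| ^ p) =ᶠ[nhds t] fun s => (s - c) ^ p := by
    have hm : Set.Ioi c ∈ nhds t := Ioi_mem_nhds h
    filter_upwards [hm] with s hs
    rw [abs_sub_comm, abs_of_pos (by simp only [Set.mem_Ioi] at hs; linarith : (0:ℝ) < s - c)]
  have := h2.congr_of_eventuallyEq h3
  simpa using this

lemma antitoneOn_glue {f : ℝ → ℝ} {a b : ℝ} (hab : a ≤ b)
    (h1 : AntitoneOn f (Icc a b)) (h2 : AntitoneOn f (Ici b)) : AntitoneOn f (Ici a) := by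
  intro s hs t ht hst
  rcases le_total t b with h | h
  · exact h1 ⟨hs, hst.trans h⟩ ⟨ht, h⟩ hst
  · rcases le_total s b with h' | h'
    · exact (h2 self_mem_Ici h h).trans (h1 ⟨hs, h'⟩ ⟨hab, le_rfl⟩ h')
    · exact h2 h' h hst

lemma monotoneOn_glue {f : ℝ → ℝ} {a b : ℝ} (hab : a ≤ b)
    (h1 : MonotoneOn f (Icc a b)) (h2 : MonotoneOn f (Ici b)) : MonotoneOn f (Ici a) := by
  intro s hs t ht hst
  rcases le_total t b with h | h
  · exact h1 ⟨hs, hst.trans h⟩ ⟨ht, h⟩ hst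
  · rcases le_total s b with h' | h'
    · exact (h1 ⟨hs, h'⟩ ⟨hab, le_rfl⟩ h').trans (h2 self_mem_Ici h h)
    · exact h2 h' h hst

lemma Gsub (p : ℝ) (hp1 : 1 ≤ p) (hp2 : p ≤ 2) {x x' y y' : ℝ}
    (hx : 0 ≤ x) (hxx : x ≤ x') (hy : 0 ≤ y) (hyy : y ≤ y') :
    (|x + y| ^ p + |x - y| ^ p) + (|x' + y'| ^ p + |x' - y'| ^ p) ≤
      (|x + y'| ^ p + |x - y'| ^ p) + (|x' + y| ^ p + |x' - y| ^ p) := by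
  rcases eq_or_lt_of_le hp1 with hp | hp
  · -- p = 1
    subst hp
    simp only [Real.rpow_one]
    have habs : |x - y| + |x' - y'| ≤ |x - y'| + |x' - y| := by
      have hconv : ConvexOn ℝ (univ : Set ℝ) (fun z : ℝ => |z|) := by
        refine ⟨convex_univ, fun u _ v _ r s hr hs hrs => ?_⟩
        simp only [smul_eq_mul]
        calc |r * u + s * v| ≤ |r * u| + |s * v| := abs_add_le _ _
          _ = r * |u| + s * |v| := by rw [abs_mul, abs_mul, abs_of_nonneg hr, abs_of_nonneg hs]
      exact two_point_convex hconv (mem_univ _) (mem_univ _)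
        (by linarith : x - y' ≤ x - y) (by linarith : x - y ≤ x' - y)
        (by linarith : x - y' ≤ x' - y') (by linarith : x' - y' ≤ x' - y) (by ring)
    rw [abs_of_nonneg (by linarith : (0:ℝ) ≤ x + y), abs_of_nonneg (by linarith : (0:ℝ) ≤ x' + y'),
      abs_of_nonneg (by linarith : (0:ℝ) ≤ x + y'), abs_of_nonneg (by linarith : (0:ℝ) ≤ x' + y)]
    linarith
  · -- 1 < p ≤ 2
    have hp0 : (0:ℝ) < p := by linarith
    have hq0 : (0:ℝ) < p - 1 := by linarith
    have hq1 : p - 1 ≤ 1 := by linarith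
    have hcc := concaveOn_rpow' hq0 hq1
    set g : ℝ → ℝ := fun t => (|x' + t| ^ p + |x' - t| ^ p) - (|x + t| ^ p + |x - t| ^ p)
      with hgdef
    have contg : Continuous g := by
      have c1 : ∀ c : ℝ, Continuous fun t : ℝ => |c + t| ^ p := fun c =>
        ((continuous_const.add continuous_id).abs).rpow_const (fun s => Or.inr hp0.le)
      have c2 : ∀ c : ℝ, Continuous fun t : ℝ => |c - t| ^ p := fun c =>
        ((continuous_const.sub continuous_id).abs).rpow_const (fun s => Or.inr hp0.le)
      exact (((c1 x').add (c2 x')).sub ((c1 x).add (c2 x)))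
    -- piece 1 : Icc 0 x
    have piece1 : AntitoneOn g (Icc 0 x) := by
      apply antitoneOn_of_deriv_nonpos (convex_Icc 0 x) contg.continuousOn
      · intro t ht
        rw [interior_Icc] at ht
        obtain ⟨ht0, htx⟩ := ht
        exact (((hd_absP p (by linarith)).add (hd_absM_pos p (by linarith))).sub
          ((hd_absP p (by linarith)).add (hd_absM_pos p htx))).differentiableAt.differentiableWithinAt
      · intro t ht
        rw [interior_Icc] at ht
        obtain ⟨ht0, htx⟩ := ht
        have hG := (((hd_absP p (by linarith : (0:ℝ) < x' + t)).add
            (hd_absM_pos p (by linarith : t < x'))).sub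
          ((hd_absP p (by linarith : (0:ℝ) < x + t)).add (hd_absM_pos p htx)))
        rw [show deriv g t = _ from hG.deriv]
        have key : (x - t) ^ (p-1) + (x' + t) ^ (p-1) ≤ (x' - t) ^ (p-1) + (x + t) ^ (p-1) :=
          two_point_concave hcc (mem_Ici.2 (by linarith : (0:ℝ) ≤ x - t))
            (mem_Ici.2 (by linarith : (0:ℝ) ≤ x' + t))
            (by linarith) (by linarith) (by linarith) (by linarith) (by ring)
        nlinarith [key, hp0.le]
    -- piece 2 : Icc x x'
    have piece2 : AntitoneOn g (Icc x x') := by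
      apply antitoneOn_of_deriv_nonpos (convex_Icc x x') contg.continuousOn
      · intro t ht
        rw [interior_Icc] at ht
        obtain ⟨htx, htx'⟩ := ht
        exact (((hd_absP p (by linarith)).add (hd_absM_pos p htx')).sub
          ((hd_absP p (by linarith)).add (hd_absM_neg p htx))).differentiableAt.differentiableWithinAt
      · intro t ht
        rw [interior_Icc] at ht
        obtain ⟨htx, htx'⟩ := ht
        have ht0 : (0:ℝ) < t := lt_of_le_of_lt hx htx
        have hG := (((hd_absP p (by linarith : (0:ℝ) < x' + t)).add (hd_absM_pos p htx')).sub
          ((hd_absP p (by linarith : (0:ℝ) < x + t)).add (hd_absM_neg p htx)))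
        rw [show deriv g t = _ from hG.deriv]
        have s1 : (x' + t) ^ (p-1) ≤ (x' - t) ^ (p-1) + (2*t) ^ (p-1) := by
          have e : x' + t = (x' - t) + 2*t := by ring
          rw [e]
          exact rpow_subadd hq0 hq1 (by linarith) (by linarith)
        have s2 : (2*t) ^ (p-1) ≤ (x + t) ^ (p-1) + (t - x) ^ (p-1) := by
          have e : 2*t = (x + t) + (t - x) := by ring
          rw [e]
          exact rpow_subadd hq0 hq1 (by linarith) (by linarith)
        nlinarith [hp0.le]
    -- piece 3 : Ici x'
    have piece3 : AntitoneOn g (Ici x') := by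
      apply antitoneOn_of_deriv_nonpos (convex_Ici x') contg.continuousOn
      · intro t ht
        rw [interior_Ici] at ht
        exact (((hd_absP p (by simp only [Set.mem_Ioi] at ht; linarith)).add
          (hd_absM_neg p ht)).sub ((hd_absP p (by simp only [Set.mem_Ioi] at ht; linarith)).add
          (hd_absM_neg p (by simp only [Set.mem_Ioi] at ht; linarith)))).differentiableAt.differentiableWithinAt
      · intro t ht
        rw [interior_Ici] at ht
        simp only [Set.mem_Ioi] at ht
        have hG := (((hd_absP p (by linarith : (0:ℝ) < x' + t)).add
            (hd_absM_neg p (show x' < t from ht))).sub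
          ((hd_absP p (by linarith : (0:ℝ) < x + t)).add
            (hd_absM_neg p (by linarith : x < t))))
        rw [show deriv g t = _ from hG.deriv]
        have key : (t - x') ^ (p-1) + (x' + t) ^ (p-1) ≤ (x + t) ^ (p-1) + (t - x) ^ (p-1) :=
          two_point_concave hcc (mem_Ici.2 (by linarith : (0:ℝ) ≤ t - x'))
            (mem_Ici.2 (by linarith : (0:ℝ) ≤ x' + t))
            (by linarith) (by linarith) (by linarith) (by linarith) (by ring)
        nlinarith [key, hp0.le]
    have hanti : AntitoneOn g (Ici 0) :=
      antitoneOn_glue hx piece1 (antitoneOn_glue hxx piece2 piece3)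
    have := hanti (mem_Ici.2 hy) (mem_Ici.2 (hy.trans hyy)) hyy
    simp only [hgdef] at this
    linarith

lemma Gsup (p : ℝ) (hp2 : 2 ≤ p) {x x' y y' : ℝ}
    (hx : 0 ≤ x) (hxx : x ≤ x') (hy : 0 ≤ y) (hyy : y ≤ y') :
    (|x + y'| ^ p + |x - y'| ^ p) + (|x' + y| ^ p + |x' - y| ^ p) ≤
      (|x + y| ^ p + |x - y| ^ p) + (|x' + y'| ^ p + |x' - y'| ^ p) := by
  have hp0 : (0:ℝ) < p := by linarith
  have hq1 : (1:ℝ) ≤ p - 1 := by linarith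
  have hcv : ConvexOn ℝ (Ici 0) fun z : ℝ => z ^ (p - 1) := convexOn_rpow hq1
  set g : ℝ → ℝ := fun t => (|x' + t| ^ p + |x' - t| ^ p) - (|x + t| ^ p + |x - t| ^ p)
    with hgdef
  have contg : Continuous g := by
    have c1 : ∀ c : ℝ, Continuous fun t : ℝ => |c + t| ^ p := fun c =>
      ((continuous_const.add continuous_id).abs).rpow_const (fun s => Or.inr hp0.le)
    have c2 : ∀ c : ℝ, Continuous fun t : ℝ => |c - t| ^ p := fun c =>
      ((continuous_const.sub continuous_id).abs).rpow_const (fun s => Or.inr hp0.le)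
    exact (((c1 x').add (c2 x')).sub ((c1 x).add (c2 x)))
  have piece1 : MonotoneOn g (Icc 0 x) := by
    apply monotoneOn_of_deriv_nonneg (convex_Icc 0 x) contg.continuousOn
    · intro t ht
      rw [interior_Icc] at ht
      obtain ⟨ht0, htx⟩ := ht
      exact (((hd_absP p (by linarith)).add (hd_absM_pos p (by linarith))).sub
        ((hd_absP p (by linarith)).add (hd_absM_pos p htx))).differentiableAt.differentiableWithinAt
    · intro t ht
      rw [interior_Icc] at ht
      obtain ⟨ht0, htx⟩ := ht
      have hG := (((hd_absP p (by linarith : (0:ℝ) < x' + t)).add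
          (hd_absM_pos p (by linarith : t < x'))).sub
        ((hd_absP p (by linarith : (0:ℝ) < x + t)).add (hd_absM_pos p htx)))
      rw [show deriv g t = _ from hG.deriv]
      have key : (x' - t) ^ (p-1) + (x + t) ^ (p-1) ≤ (x - t) ^ (p-1) + (x' + t) ^ (p-1) :=
        two_point_convex hcv (mem_Ici.2 (by linarith : (0:ℝ) ≤ x - t))
          (mem_Ici.2 (by linarith : (0:ℝ) ≤ x' + t))
          (by linarith) (by linarith) (by linarith) (by linarith) (by ring)
      nlinarith [key, hp0.le]
  have piece2 : MonotoneOn g (Icc x x') := by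
    apply monotoneOn_of_deriv_nonneg (convex_Icc x x') contg.continuousOn
    · intro t ht
      rw [interior_Icc] at ht
      obtain ⟨htx, htx'⟩ := ht
      exact (((hd_absP p (by linarith)).add (hd_absM_pos p htx')).sub
        ((hd_absP p (by linarith)).add (hd_absM_neg p htx))).differentiableAt.differentiableWithinAt
    · intro t ht
      rw [interior_Icc] at ht
      obtain ⟨htx, htx'⟩ := ht
      have ht0 : (0:ℝ) < t := lt_of_le_of_lt hx htx
      have hG := (((hd_absP p (by linarith : (0:ℝ) < x' + t)).add (hd_absM_pos p htx')).sub
        ((hd_absP p (by linarith : (0:ℝ) < x + t)).add (hd_absM_neg p htx)))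
      rw [show deriv g t = _ from hG.deriv]
      have s1 : (x' - t) ^ (p-1) + (2*t) ^ (p-1) ≤ (x' + t) ^ (p-1) := by
        have e : x' + t = (x' - t) + 2*t := by ring
        rw [e]
        exact rpow_superadd hq1 (by linarith) (by linarith)
      have s2 : (x + t) ^ (p-1) + (t - x) ^ (p-1) ≤ (2*t) ^ (p-1) := by
        have e : 2*t = (x + t) + (t - x) := by ring
        rw [e]
        exact rpow_superadd hq1 (by linarith) (by linarith)
      nlinarith [hp0.le]
  have piece3 : MonotoneOn g (Ici x') := by
    apply monotoneOn_of_deriv_nonneg (convex_Ici x') contg.continuousOn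
    · intro t ht
      rw [interior_Ici] at ht
      exact (((hd_absP p (by simp only [Set.mem_Ioi] at ht; linarith)).add
        (hd_absM_neg p ht)).sub ((hd_absP p (by simp only [Set.mem_Ioi] at ht; linarith)).add
        (hd_absM_neg p (by simp only [Set.mem_Ioi] at ht; linarith)))).differentiableAt.differentiableWithinAt
    · intro t ht
      rw [interior_Ici] at ht
      simp only [Set.mem_Ioi] at ht
      have hG := (((hd_absP p (by linarith : (0:ℝ) < x' + t)).add
          (hd_absM_neg p (show x' < t from ht))).sub
        ((hd_absP p (by linarith : (0:ℝ) < x + t)).add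
          (hd_absM_neg p (by linarith : x < t))))
      rw [show deriv g t = _ from hG.deriv]
      have key : (x + t) ^ (p-1) + (t - x) ^ (p-1) ≤ (t - x') ^ (p-1) + (x' + t) ^ (p-1) :=
        two_point_convex hcv (mem_Ici.2 (by linarith : (0:ℝ) ≤ t - x'))
          (mem_Ici.2 (by linarith : (0:ℝ) ≤ x' + t))
          (by linarith) (by linarith) (by linarith) (by linarith) (by ring)
      nlinarith [key, hp0.le]
  have hmono : MonotoneOn g (Ici 0) :=
    monotoneOn_glue hx piece1 (monotoneOn_glue hxx piece2 piece3)
  have := hmono (mem_Ici.2 hy) (mem_Ici.2 (hy.trans hyy)) hyy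
  simp only [hgdef] at this
  linarith

end Helpers


lemma sum_split {n : ℕ} {β : Type*} [AddCommMonoid β] (i j : Fin n) (hne : i ≠ j)
    (f : Fin n → β) :
    ∑ k, f k = f i + f j + ∑ k ∈ (Finset.univ.erase i).erase j, f k := by
  rw [← Finset.add_sum_erase _ f (Finset.mem_univ i),
    ← Finset.add_sum_erase _ f (Finset.mem_erase.2 ⟨hne.symm, Finset.mem_univ j⟩), add_assoc]

lemma sum_exchange_le {n : ℕ} (F : ℝ → ℝ → ℝ) (c d : Fin n → ℝ)
    (hF : ∀ i j k l : Fin n, i ≤ j → k ≤ l →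
      F (c i) (d k) + F (c j) (d l) ≤ F (c i) (d l) + F (c j) (d k))
    (σ : Equiv.Perm (Fin n)) :
    ∑ i, F (c i) (d i) ≤ ∑ i, F (c i) (d (σ i)) := by
  classical
  suffices H : ∀ (N : ℕ) (τ : Equiv.Perm (Fin n)),
      (∑ i : Fin n, (i : ℕ) * (n - (τ i : ℕ))) ≤ N →
      ∑ i, F (c i) (d i) ≤ ∑ i, F (c i) (d (τ i)) from
    H _ σ le_rfl
  intro N
  induction N using Nat.strong_induction_on with
  | _ N IH =>
    intro τ hτ
    rcases eq_or_ne τ 1 with rfl | hne1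
    · simp
    · -- find an inversion
      have hexists : ∃ i j : Fin n, i < j ∧ τ j < τ i := by
        by_contra hno
        push_neg at hno
        have hsm : StrictMono τ := fun i j hij =>
          lt_of_le_of_ne (hno i j hij) fun heq => (ne_of_lt hij) (τ.injective heq)
        exact hne1 (Equiv.ext fun k => Fin.ext
          (Fin.coe_orderIso_apply ⟨(τ : Equiv.Perm (Fin n)), fun {a b} => hsm.le_iff_le⟩ k))
      obtain ⟨i, j, hij, hinv⟩ := hexists
      have hne : i ≠ j := ne_of_lt hij
      set σ' := τ * Equiv.swap i j with hσ'
      have hi : σ' i = τ j := by simp [hσ', Equiv.Perm.mul_apply]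
      have hj : σ' j = τ i := by simp [hσ', Equiv.Perm.mul_apply]
      have hk : ∀ k, k ≠ i → k ≠ j → σ' k = τ k := fun k h1 h2 => by
        simp [hσ', Equiv.Perm.mul_apply, Equiv.swap_apply_of_ne_of_ne h1 h2]
      -- measure decreases
      have hMlt : (∑ k : Fin n, (k : ℕ) * (n - (σ' k : ℕ))) <
          ∑ k : Fin n, (k : ℕ) * (n - (τ k : ℕ)) := by
        rw [sum_split i j hne, sum_split i j hne]
        have etail : ∑ k ∈ (Finset.univ.erase i).erase j, (k : ℕ) * (n - (σ' k : ℕ)) =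
            ∑ k ∈ (Finset.univ.erase i).erase j, (k : ℕ) * (n - (τ k : ℕ)) := by
          refine Finset.sum_congr rfl fun k hk' => ?_
          have hkj : k ≠ j := (Finset.mem_erase.1 hk').1
          have hki : k ≠ i := (Finset.mem_erase.1 (Finset.mem_erase.1 hk').2).1
          rw [hk k hki hkj]
        rw [etail, hi, hj]
        have h1 : (τ i : ℕ) < n := (τ i).isLt
        have h2 : (τ j : ℕ) < n := (τ j).isLt
        have h3 : (i : ℕ) < (j : ℕ) := hij
        have h4 : (τ j : ℕ) < (τ i : ℕ) := hinv
        apply Nat.add_lt_add_right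
        zify [h1.le, h2.le]
        nlinarith [h3, h4]
      -- the sum decreases when passing from σ' to τ... rather, exchange step
      have hstep : ∑ k, F (c k) (d (σ' k)) ≤ ∑ k, F (c k) (d (τ k)) := by
        rw [sum_split i j hne (fun k => F (c k) (d (σ' k))),
          sum_split i j hne (fun k => F (c k) (d (τ k)))]
        have etail : ∑ k ∈ (Finset.univ.erase i).erase j, F (c k) (d (σ' k)) =
            ∑ k ∈ (Finset.univ.erase i).erase j, F (c k) (d (τ k)) := by
          refine Finset.sum_congr rfl fun k hk' => ?_
          have hkj : k ≠ j := (Finset.mem_erase.1 hk').1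
          have hki : k ≠ i := (Finset.mem_erase.1 (Finset.mem_erase.1 hk').2).1
          rw [hk k hki hkj]
        rw [etail, hi, hj]
        have := hF i j (τ j) (τ i) hij.le hinv.le
        linarith
      exact (IH _ (lt_of_lt_of_le hMlt hτ) σ' le_rfl).trans hstep

lemma sum_exchange_ge {n : ℕ} (F : ℝ → ℝ → ℝ) (c d : Fin n → ℝ)
    (hF : ∀ i j k l : Fin n, i ≤ j → k ≤ l →
      F (c i) (d l) + F (c j) (d k) ≤ F (c i) (d k) + F (c j) (d l))
    (σ : Equiv.Perm (Fin n)) :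
    ∑ i, F (c i) (d (σ i)) ≤ ∑ i, F (c i) (d i) := by
  have h := sum_exchange_le (fun x y => -F x y) c d
    (fun i j k l hij hkl => by have := hF i j k l hij hkl; linarith) σ
  rw [Finset.sum_neg_distrib, Finset.sum_neg_distrib] at h
  linarith

theorem scalar_rearrangement_extremizers {n : ℕ} (a b : Fin n → ℝ)
    (ha0 : ∀ i, 0 ≤ a i) (hb0 : ∀ i, 0 ≤ b i) (p : ℝ) :
    (1 ≤ p → p ≤ 2 → ∀ π : Equiv.Perm (Fin n),
      ((∑ i, (|descSort a i + descSort b i| ^ p + |descSort a i - descSort b i| ^ p)) ≤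
        ∑ i, (|a i + b (π i)| ^ p + |a i - b (π i)| ^ p)) ∧
      ((∑ i, (|a i + b (π i)| ^ p + |a i - b (π i)| ^ p)) ≤
        ∑ i, (|ascSort a i + descSort b i| ^ p + |ascSort a i - descSort b i| ^ p))) ∧
    (2 ≤ p → ∀ π : Equiv.Perm (Fin n),
      ((∑ i, (|ascSort a i + descSort b i| ^ p + |ascSort a i - descSort b i| ^ p)) ≤
        ∑ i, (|a i + b (π i)| ^ p + |a i - b (π i)| ^ p)) ∧
      ((∑ i, (|a i + b (π i)| ^ p + |a i - b (π i)| ^ p)) ≤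
        ∑ i, (|descSort a i + descSort b i| ^ p + |descSort a i - descSort b i| ^ p))) := by
  classical
  have hcm : ∀ {i j : Fin n}, i ≤ j → ascSort a i ≤ ascSort a j :=
    fun {i j} h => Tuple.monotone_sort a h
  have hdm : ∀ {i j : Fin n}, i ≤ j → ascSort b i ≤ ascSort b j :=
    fun {i j} h => Tuple.monotone_sort b h
  have hDm : ∀ {i j : Fin n}, i ≤ j → descSort b j ≤ descSort b i :=
    fun {i j} h => Tuple.monotone_sort b (Fin.rev_le_rev.2 h)
  have hc0 : ∀ i, 0 ≤ ascSort a i := fun i => ha0 _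
  have hd0 : ∀ i, 0 ≤ ascSort b i := fun i => hb0 _
  have hD0 : ∀ i, 0 ≤ descSort b i := fun i => hb0 _
  have Ediag : ∑ i, (|descSort a i + descSort b i| ^ p + |descSort a i - descSort b i| ^ p)
      = ∑ i, (|ascSort a i + ascSort b i| ^ p + |ascSort a i - ascSort b i| ^ p) := by
    rw [← Equiv.sum_comp Fin.revPerm
      (fun k => (|ascSort a k + ascSort b k| ^ p + |ascSort a k - ascSort b k| ^ p))]
    exact Finset.sum_congr rfl fun i _ => rfl
  have Eπ : ∀ π : Equiv.Perm (Fin n),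
      ∑ i, (|a i + b (π i)| ^ p + |a i - b (π i)| ^ p) =
      ∑ i, (|ascSort a i + ascSort b (((Tuple.sort b)⁻¹ * π * Tuple.sort a) i)| ^ p
        + |ascSort a i - ascSort b (((Tuple.sort b)⁻¹ * π * Tuple.sort a) i)| ^ p) := by
    intro π
    rw [← Equiv.sum_comp (Tuple.sort a)
      (fun k => (|a k + b (π k)| ^ p + |a k - b (π k)| ^ p))]
    refine Finset.sum_congr rfl fun i _ => ?_
    simp only [ascSort, Function.comp_apply, Equiv.Perm.mul_apply, Equiv.Perm.inv_def, Equiv.apply_symm_apply]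
  have EDτ : ∀ τ : Equiv.Perm (Fin n),
      ∑ i, (|ascSort a i + ascSort b (τ i)| ^ p + |ascSort a i - ascSort b (τ i)| ^ p) =
      ∑ i, (|ascSort a i + descSort b ((Fin.revPerm * τ : Equiv.Perm (Fin n)) i)| ^ p
        + |ascSort a i - descSort b ((Fin.revPerm * τ : Equiv.Perm (Fin n)) i)| ^ p) := by
    intro τ
    refine Finset.sum_congr rfl fun i _ => ?_
    simp only [descSort, Equiv.Perm.mul_apply, Fin.revPerm_apply, Fin.rev_rev]
  constructor
  · intro hp1 hp2 π
    have hFsub : ∀ i j k l : Fin n, i ≤ j → k ≤ l →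
        (|ascSort a i + ascSort b k| ^ p + |ascSort a i - ascSort b k| ^ p)
          + (|ascSort a j + ascSort b l| ^ p + |ascSort a j - ascSort b l| ^ p) ≤
        (|ascSort a i + ascSort b l| ^ p + |ascSort a i - ascSort b l| ^ p)
          + (|ascSort a j + ascSort b k| ^ p + |ascSort a j - ascSort b k| ^ p) :=
      fun i j k l hij hkl => Gsub p hp1 hp2 (hc0 i) (hcm hij) (hd0 k) (hdm hkl)
    have hFsub' : ∀ i j k l : Fin n, i ≤ j → k ≤ l →
        (|ascSort a i + descSort b l| ^ p + |ascSort a i - descSort b l| ^ p)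
          + (|ascSort a j + descSort b k| ^ p + |ascSort a j - descSort b k| ^ p) ≤
        (|ascSort a i + descSort b k| ^ p + |ascSort a i - descSort b k| ^ p)
          + (|ascSort a j + descSort b l| ^ p + |ascSort a j - descSort b l| ^ p) :=
      fun i j k l hij hkl => Gsub p hp1 hp2 (hc0 i) (hcm hij) (hD0 l) (hDm hkl)
    constructor
    · rw [Ediag, Eπ π]
      exact sum_exchange_le (fun x y => |x + y| ^ p + |x - y| ^ p)
        (ascSort a) (ascSort b) hFsub ((Tuple.sort b)⁻¹ * π * Tuple.sort a)
    · rw [Eπ π, EDτ ((Tuple.sort b)⁻¹ * π * Tuple.sort a)]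
      exact sum_exchange_ge (fun x y => |x + y| ^ p + |x - y| ^ p)
        (ascSort a) (descSort b) hFsub'
        (Fin.revPerm * ((Tuple.sort b)⁻¹ * π * Tuple.sort a))
  · intro hp2 π
    have hFsup : ∀ i j k l : Fin n, i ≤ j → k ≤ l →
        (|ascSort a i + ascSort b l| ^ p + |ascSort a i - ascSort b l| ^ p)
          + (|ascSort a j + ascSort b k| ^ p + |ascSort a j - ascSort b k| ^ p) ≤
        (|ascSort a i + ascSort b k| ^ p + |ascSort a i - ascSort b k| ^ p)
          + (|ascSort a j + ascSort b l| ^ p + |ascSort a j - ascSort b l| ^ p) :=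
      fun i j k l hij hkl => Gsup p hp2 (hc0 i) (hcm hij) (hd0 k) (hdm hkl)
    have hFsup' : ∀ i j k l : Fin n, i ≤ j → k ≤ l →
        (|ascSort a i + descSort b k| ^ p + |ascSort a i - descSort b k| ^ p)
          + (|ascSort a j + descSort b l| ^ p + |ascSort a j - descSort b l| ^ p) ≤
        (|ascSort a i + descSort b l| ^ p + |ascSort a i - descSort b l| ^ p)
          + (|ascSort a j + descSort b k| ^ p + |ascSort a j - descSort b k| ^ p) :=
      fun i j k l hij hkl => Gsup p hp2 (hc0 i) (hcm hij) (hD0 l) (hDm hkl)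
    constructor
    · rw [Eπ π, EDτ ((Tuple.sort b)⁻¹ * π * Tuple.sort a)]
      exact sum_exchange_le (fun x y => |x + y| ^ p + |x - y| ^ p)
        (ascSort a) (descSort b) hFsup'
        (Fin.revPerm * ((Tuple.sort b)⁻¹ * π * Tuple.sort a))
    · rw [Ediag, Eπ π]
      exact sum_exchange_ge (fun x y => |x + y| ^ p + |x - y| ^ p)
        (ascSort a) (ascSort b) hFsup ((Tuple.sort b)⁻¹ * π * Tuple.sort a)
end

section
/- The function F(x, y) = |x+y|^p + |x−y|^p on ℝ≥0 × ℝ≥0 satisfies F(u_2, v_2) + F(u_1, v_1) ≤ F(u_2, v_1) + F(u_1, v_2) whenever u_1 ≥ u_2 ≥ 0 and v_1 ≥ v_2 ≥ 0, for 1 ≤ p ≤ 2; the inequality reverses for p ≥ 2. -/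
open Set

/-- superadditivity of rpow for exponent ≥ 1 -/
private lemma rpow_superadd_s14 {q x y : ℝ} (hq : 1 ≤ q) (hx : 0 ≤ x) (hy : 0 ≤ y) :
    x ^ q + y ^ q ≤ (x + y) ^ q := by
  have h := NNReal.coe_le_coe.2 (NNReal.add_rpow_le_rpow_add x.toNNReal y.toNNReal hq)
  simpa [NNReal.coe_rpow, Real.coe_toNNReal _ hx, Real.coe_toNNReal _ hy,
    Real.coe_toNNReal _ (add_nonneg hx hy), Real.toNNReal_add hx hy] using h

/-- subadditivity of rpow for exponent ≤ 1 -/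
private lemma rpow_subadd_s14 {q x y : ℝ} (hq0 : 0 ≤ q) (hq : q ≤ 1) (hx : 0 ≤ x) (hy : 0 ≤ y) :
    (x + y) ^ q ≤ x ^ q + y ^ q := by
  have h := NNReal.coe_le_coe.2 (NNReal.rpow_add_le_add_rpow x.toNNReal y.toNNReal hq0 hq)
  simpa [NNReal.coe_rpow, Real.coe_toNNReal _ hx, Real.coe_toNNReal _ hy,
    Real.coe_toNNReal _ (add_nonneg hx hy), Real.toNNReal_add hx hy] using h

private lemma convex_dd {q a b c d : ℝ} (hq : 1 ≤ q) (ha : 0 ≤ a) (hac : a ≤ c) (hcb : c ≤ b)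
    (hsum : a + b = c + d) : c ^ q + d ^ q ≤ a ^ q + b ^ q := by
  have hd : d = a + b - c := by linarith
  subst hd
  rcases eq_or_lt_of_le (hac.trans hcb) with heq | hab
  · have h1 : c = a := le_antisymm (heq ▸ hcb) hac
    rw [h1]; ring_nf; exact le_refl _
  · have hb : 0 ≤ b := ha.trans hab.le
    have hba : (0:ℝ) < b - a := by linarith
    set t := (c - a) / (b - a) with htdef
    have ht0 : 0 ≤ t := div_nonneg (by linarith) hba.le
    have ht1 : t ≤ 1 := (div_le_one hba).2 (by linarith)
    have e1 : (1 - t) * a + t * b = c := by rw [htdef]; field_simp [hba.ne']; ring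
    have e2 : t * a + (1 - t) * b = a + b - c := by rw [htdef]; field_simp [hba.ne']; ring
    have h1 := (convexOn_rpow hq).2 (mem_Ici.2 ha) (mem_Ici.2 hb)
      (by linarith : (0:ℝ) ≤ 1 - t) ht0 (by ring)
    have h2 := (convexOn_rpow hq).2 (mem_Ici.2 ha) (mem_Ici.2 hb)
      ht0 (by linarith : (0:ℝ) ≤ 1 - t) (by ring)
    simp only [smul_eq_mul] at h1 h2
    rw [e1] at h1
    rw [e2] at h2
    linarith

private lemma concave_dd {q a b c d : ℝ} (hq0 : 0 ≤ q) (hq : q ≤ 1) (ha : 0 ≤ a) (hac : a ≤ c)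
    (hcb : c ≤ b) (hsum : a + b = c + d) : a ^ q + b ^ q ≤ c ^ q + d ^ q := by
  have hd : d = a + b - c := by linarith
  subst hd
  rcases eq_or_lt_of_le (hac.trans hcb) with heq | hab
  · have h1 : c = a := le_antisymm (heq ▸ hcb) hac
    rw [h1]; ring_nf; exact le_refl _
  · have hb : 0 ≤ b := ha.trans hab.le
    have hba : (0:ℝ) < b - a := by linarith
    set t := (c - a) / (b - a) with htdef
    have ht0 : 0 ≤ t := div_nonneg (by linarith) hba.le
    have ht1 : t ≤ 1 := (div_le_one hba).2 (by linarith)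
    have e1 : (1 - t) * a + t * b = c := by rw [htdef]; field_simp [hba.ne']; ring
    have e2 : t * a + (1 - t) * b = a + b - c := by rw [htdef]; field_simp [hba.ne']; ring
    have h1 := (Real.concaveOn_rpow hq0 hq).2 (mem_Ici.2 ha) (mem_Ici.2 hb)
      (by linarith : (0:ℝ) ≤ 1 - t) ht0 (by ring)
    have h2 := (Real.concaveOn_rpow hq0 hq).2 (mem_Ici.2 ha) (mem_Ici.2 hb)
      ht0 (by linarith : (0:ℝ) ≤ 1 - t) (by ring)
    simp only [smul_eq_mul] at h1 h2
    rw [e1] at h1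
    rw [e2] at h2
    linarith

noncomputable def hkPsi (q s : ℝ) : ℝ := Real.sign s * |s| ^ q

private lemma hkPsi_of_nonneg {q s : ℝ} (hq : 0 < q) (hs : 0 ≤ s) : hkPsi q s = s ^ q := by
  rcases eq_or_lt_of_le hs with h | h
  · rw [← h]; simp [hkPsi, Real.zero_rpow hq.ne']
  · rw [hkPsi, Real.sign_of_pos h, abs_of_pos h, one_mul]

private lemma hkPsi_of_nonpos {q s : ℝ} (hq : 0 < q) (hs : s ≤ 0) : hkPsi q s = -((-s) ^ q) := by
  rcases eq_or_lt_of_le hs with h | h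
  · rw [h]; simp [hkPsi, Real.zero_rpow hq.ne']
  · rw [hkPsi, Real.sign_of_neg h, abs_of_neg h]; ring

private lemma hkPsi_inc {q : ℝ} (hq : 1 ≤ q) {x y c : ℝ} (hxy : x ≤ y)
    (hx : |x| ≤ x + c) (hy : |y| ≤ y + c) :
    hkPsi q y - hkPsi q x ≤ hkPsi q (y + c) - hkPsi q (x + c) := by
  have hq0 : (0:ℝ) < q := lt_of_lt_of_le one_pos hq
  have hc : 0 ≤ c := by have := le_abs_self x; linarith
  have hxc : 0 ≤ x + c := (abs_nonneg x).trans hx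
  have hyc : 0 ≤ y + c := (abs_nonneg y).trans hy
  rcases le_or_gt 0 x with hx0 | hx0
  · have hy0 : 0 ≤ y := hx0.trans hxy
    rw [hkPsi_of_nonneg hq0 hx0, hkPsi_of_nonneg hq0 hy0, hkPsi_of_nonneg hq0 hxc,
      hkPsi_of_nonneg hq0 hyc]
    have h := convex_dd (a := x) (b := y + c) (c := y) (d := x + c) hq hx0 hxy
      (by linarith) (by ring)
    linarith
  · rcases le_or_gt y 0 with hy0 | hy0
    · rw [hkPsi_of_nonpos hq0 hx0.le, hkPsi_of_nonpos hq0 hy0, hkPsi_of_nonneg hq0 hxc,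
        hkPsi_of_nonneg hq0 hyc]
      have hax : -x ≤ x + c := by rw [abs_of_neg hx0] at hx; exact hx
      have h := convex_dd (a := -y) (b := y + c) (c := -x) (d := x + c) hq
        (by linarith) (by linarith) (by linarith) (by ring)
      linarith
    · rw [hkPsi_of_nonpos hq0 hx0.le, hkPsi_of_nonneg hq0 hy0.le, hkPsi_of_nonneg hq0 hxc,
        hkPsi_of_nonneg hq0 hyc]
      have hax : -x ≤ x + c := by rw [abs_of_neg hx0] at hx; exact hx
      have h1 : y ^ q + (x + c) ^ q ≤ (y + (x + c)) ^ q := rpow_superadd_s14 hq hy0.le hxc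
      have h2 : (y + (x + c)) ^ q + (-x) ^ q ≤ (y + (x + c) + -x) ^ q :=
        rpow_superadd_s14 hq (by linarith) (by linarith)
      rw [show y + (x + c) + -x = y + c by ring] at h2
      linarith

private lemma hkPsi_dec {q : ℝ} (hq0 : 0 < q) (hq : q ≤ 1) {x y c : ℝ} (hxy : x ≤ y)
    (hx : |x| ≤ x + c) (hy : |y| ≤ y + c) :
    hkPsi q (y + c) - hkPsi q (x + c) ≤ hkPsi q y - hkPsi q x := by
  have hc : 0 ≤ c := by have := le_abs_self x; linarith
  have hxc : 0 ≤ x + c := (abs_nonneg x).trans hx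
  have hyc : 0 ≤ y + c := (abs_nonneg y).trans hy
  rcases le_or_gt 0 x with hx0 | hx0
  · have hy0 : 0 ≤ y := hx0.trans hxy
    rw [hkPsi_of_nonneg hq0 hx0, hkPsi_of_nonneg hq0 hy0, hkPsi_of_nonneg hq0 hxc,
      hkPsi_of_nonneg hq0 hyc]
    have h := concave_dd (a := x) (b := y + c) (c := y) (d := x + c) hq0.le hq hx0 hxy
      (by linarith) (by ring)
    linarith
  · rcases le_or_gt y 0 with hy0 | hy0
    · rw [hkPsi_of_nonpos hq0 hx0.le, hkPsi_of_nonpos hq0 hy0, hkPsi_of_nonneg hq0 hxc,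
        hkPsi_of_nonneg hq0 hyc]
      have hax : -x ≤ x + c := by rw [abs_of_neg hx0] at hx; exact hx
      have h := concave_dd (a := -y) (b := y + c) (c := -x) (d := x + c) hq0.le hq
        (by linarith) (by linarith) (by linarith) (by ring)
      linarith
    · rw [hkPsi_of_nonpos hq0 hx0.le, hkPsi_of_nonneg hq0 hy0.le, hkPsi_of_nonneg hq0 hxc,
        hkPsi_of_nonneg hq0 hyc]
      have hax : -x ≤ x + c := by rw [abs_of_neg hx0] at hx; exact hx
      have h1 : (y + (x + c)) ^ q ≤ y ^ q + (x + c) ^ q := rpow_subadd_s14 hq0.le hq hy0.le hxc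
      have h2 : (y + (x + c) + -x) ^ q ≤ (y + (x + c)) ^ q + (-x) ^ q :=
        rpow_subadd_s14 hq0.le hq (by linarith) (by linarith)
      rw [show y + (x + c) + -x = y + c by ring] at h2
      linarith

private lemma hk_hasDerivAt_abs_rpow {p : ℝ} (hp : 1 < p) (s : ℝ) :
    HasDerivAt (fun x : ℝ => |x| ^ p) (p * hkPsi (p - 1) s) s := by
  have h := hasDerivAt_abs_rpow s hp
  convert h using 1
  rcases lt_trichotomy s 0 with hs | hs | hs
  · rw [hkPsi_of_nonpos (by linarith) hs.le, abs_of_neg hs]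
    rw [show p - 1 = p - 2 + 1 by ring, Real.rpow_add_one (by linarith : (0:ℝ) < -s).ne']
    ring
  · subst hs; simp [hkPsi]
  · rw [hkPsi_of_nonneg (by linarith) hs.le, abs_of_pos hs]
    rw [show p - 1 = p - 2 + 1 by ring, Real.rpow_add_one hs.ne']
    ring

theorem submodularity_of_hanner_kernel (p : ℝ) (u₁ u₂ v₁ v₂ : ℝ)
    (hu2 : 0 ≤ u₂) (hu : u₂ ≤ u₁) (hv2 : 0 ≤ v₂) (hv : v₂ ≤ v₁) :
    (1 ≤ p → p ≤ 2 →
      (|u₂ + v₂| ^ p + |u₂ - v₂| ^ p) + (|u₁ + v₁| ^ p + |u₁ - v₁| ^ p) ≤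
        (|u₂ + v₁| ^ p + |u₂ - v₁| ^ p) + (|u₁ + v₂| ^ p + |u₁ - v₂| ^ p)) ∧
    (2 ≤ p →
      (|u₂ + v₁| ^ p + |u₂ - v₁| ^ p) + (|u₁ + v₂| ^ p + |u₁ - v₂| ^ p) ≤
        (|u₂ + v₂| ^ p + |u₂ - v₂| ^ p) + (|u₁ + v₁| ^ p + |u₁ - v₁| ^ p)) := by
  -- the generic case 1 < p, via monotonicity in the second variable
  have key : ∀ hp : 1 < p,
      (p ≤ 2 → (|u₂ + v₂| ^ p + |u₂ - v₂| ^ p) + (|u₁ + v₁| ^ p + |u₁ - v₁| ^ p) ≤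
        (|u₂ + v₁| ^ p + |u₂ - v₁| ^ p) + (|u₁ + v₂| ^ p + |u₁ - v₂| ^ p)) ∧
      (2 ≤ p → (|u₂ + v₁| ^ p + |u₂ - v₁| ^ p) + (|u₁ + v₂| ^ p + |u₁ - v₂| ^ p) ≤
        (|u₂ + v₂| ^ p + |u₂ - v₂| ^ p) + (|u₁ + v₁| ^ p + |u₁ - v₁| ^ p)) := by
    intro hp
    have hp0 : (0:ℝ) < p := by linarith
    set q : ℝ := p - 1 with hqdef
    set h : ℝ → ℝ := fun w => |u₁ + w| ^ p + |u₁ - w| ^ p - (|u₂ + w| ^ p + |u₂ - w| ^ p)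
      with hhdef
    set d : ℝ → ℝ := fun w =>
      p * hkPsi q (u₁ + w) * 1 + p * hkPsi q (u₁ - w) * -1 -
        (p * hkPsi q (u₂ + w) * 1 + p * hkPsi q (u₂ - w) * -1) with hddef
    have hder : ∀ w : ℝ, HasDerivAt h (d w) w := by
      intro w
      have t1 : HasDerivAt (fun w : ℝ => |u₁ + w| ^ p) (p * hkPsi q (u₁ + w) * 1) w :=
        (hk_hasDerivAt_abs_rpow hp (u₁ + w)).comp w ((hasDerivAt_id w).const_add u₁)
      have t2 : HasDerivAt (fun w : ℝ => |u₁ - w| ^ p) (p * hkPsi q (u₁ - w) * -1) w :=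
        (hk_hasDerivAt_abs_rpow hp (u₁ - w)).comp w ((hasDerivAt_id w).const_sub u₁)
      have t3 : HasDerivAt (fun w : ℝ => |u₂ + w| ^ p) (p * hkPsi q (u₂ + w) * 1) w :=
        (hk_hasDerivAt_abs_rpow hp (u₂ + w)).comp w ((hasDerivAt_id w).const_add u₂)
      have t4 : HasDerivAt (fun w : ℝ => |u₂ - w| ^ p) (p * hkPsi q (u₂ - w) * -1) w :=
        (hk_hasDerivAt_abs_rpow hp (u₂ - w)).comp w ((hasDerivAt_id w).const_sub u₂)
      exact (t1.add t2).sub (t3.add t4)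
    -- the increment inequality needed for the derivative sign
    have habs1 : ∀ w : ℝ, 0 ≤ w → |u₂ - w| ≤ u₂ - w + 2 * w := by
      intro w hw
      rw [show u₂ - w + 2 * w = u₂ + w by ring]
      exact abs_le.2 ⟨by linarith, by linarith⟩
    have habs2 : ∀ w : ℝ, 0 ≤ w → |u₁ - w| ≤ u₁ - w + 2 * w := by
      intro w hw
      rw [show u₁ - w + 2 * w = u₁ + w by ring]
      exact abs_le.2 ⟨by linarith, by linarith⟩
    constructor
    · -- 1 < p ≤ 2 : h is antitone on [v₂, v₁]
      intro hp2
      have hq1 : q ≤ 1 := by rw [hqdef]; linarith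
      have hq0 : (0:ℝ) < q := by rw [hqdef]; linarith
      have hmono : AntitoneOn h (Icc v₂ v₁) := by
        apply antitoneOn_of_deriv_nonpos (convex_Icc v₂ v₁)
        · exact fun x _ => (hder x).continuousAt.continuousWithinAt
        · exact fun x _ => (hder x).differentiableAt.differentiableWithinAt
        · intro x hx
          rw [interior_Icc] at hx
          have hx0 : 0 ≤ x := le_trans hv2 hx.1.le
          rw [(hder x).deriv]
          have hkey := hkPsi_dec hq0 hq1 (x := u₂ - x) (y := u₁ - x) (c := 2 * x)
            (by linarith) (habs1 x hx0) (habs2 x hx0)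
          rw [show u₂ - x + 2 * x = u₂ + x by ring, show u₁ - x + 2 * x = u₁ + x by ring]
            at hkey
          have : 0 ≤ p * ((hkPsi q (u₁ - x) - hkPsi q (u₂ - x)) -
              (hkPsi q (u₁ + x) - hkPsi q (u₂ + x))) := mul_nonneg hp0.le (by linarith)
          rw [hddef]
          dsimp only
          nlinarith [this]
      have hfin := hmono (left_mem_Icc.2 hv) (right_mem_Icc.2 hv) hv
      rw [hhdef] at hfin
      dsimp only at hfin
      linarith
    · -- 2 ≤ p : h is monotone on [v₂, v₁]
      intro hp2
      have hq1 : 1 ≤ q := by rw [hqdef]; linarith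
      have hmono : MonotoneOn h (Icc v₂ v₁) := by
        apply monotoneOn_of_deriv_nonneg (convex_Icc v₂ v₁)
        · exact fun x _ => (hder x).continuousAt.continuousWithinAt
        · exact fun x _ => (hder x).differentiableAt.differentiableWithinAt
        · intro x hx
          rw [interior_Icc] at hx
          have hx0 : 0 ≤ x := le_trans hv2 hx.1.le
          rw [(hder x).deriv]
          have hkey := hkPsi_inc hq1 (x := u₂ - x) (y := u₁ - x) (c := 2 * x)
            (by linarith) (habs1 x hx0) (habs2 x hx0)
          rw [show u₂ - x + 2 * x = u₂ + x by ring, show u₁ - x + 2 * x = u₁ + x by ring]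
            at hkey
          have : 0 ≤ p * ((hkPsi q (u₁ + x) - hkPsi q (u₂ + x)) -
              (hkPsi q (u₁ - x) - hkPsi q (u₂ - x))) := mul_nonneg hp0.le (by linarith)
          rw [hddef]
          dsimp only
          nlinarith [this]
      have hfin := hmono (left_mem_Icc.2 hv) (right_mem_Icc.2 hv) hv
      rw [hhdef] at hfin
      dsimp only at hfin
      linarith
  constructor
  · intro hp1 hp2
    rcases eq_or_lt_of_le hp1 with heq | hp1'
    · -- p = 1
      subst heq
      simp only [Real.rpow_one]
      rw [abs_of_nonneg (by linarith : (0:ℝ) ≤ u₂ + v₂),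
        abs_of_nonneg (by linarith : (0:ℝ) ≤ u₂ + v₁),
        abs_of_nonneg (by linarith : (0:ℝ) ≤ u₁ + v₂),
        abs_of_nonneg (by linarith : (0:ℝ) ≤ u₁ + v₁)]
      rcases abs_cases (u₂ - v₂) with ⟨e1, f1⟩ | ⟨e1, f1⟩ <;>
        rcases abs_cases (u₂ - v₁) with ⟨e2, f2⟩ | ⟨e2, f2⟩ <;>
        rcases abs_cases (u₁ - v₂) with ⟨e3, f3⟩ | ⟨e3, f3⟩ <;>
        rcases abs_cases (u₁ - v₁) with ⟨e4, f4⟩ | ⟨e4, f4⟩ <;>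
        linarith
    · exact (key hp1').1 hp2
  · intro hp2
    exact (key (by linarith)).2 hp2
end

section
/- There exist 2×2 self-adjoint complex matrices A, B with A+B ≥ 0 and A−B ≥ 0 for which ‖A+B‖_p^p + ‖A−B‖_p^p < ‖σ(A)+σ(B)‖_p^p + ‖σ(A)−σ(B)‖_p^p for some p with 1 < p < 2. Concretely, A = diag(6, 5) and B = [[0,1],[1,0]] give such a counterexample (e.g., at p = 3/2). -/
open Matrix Finset
open scoped ComplexOrder

/- ### Auxiliary lemmas -/

lemma perm_fin_two' (σ : Equiv.Perm (Fin 2)) : (σ 0 = 0 ∧ σ 1 = 1) ∨ (σ 0 = 1 ∧ σ 1 = 0) := by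
  revert σ; decide

lemma bound32_le {t c : ℝ} (ht : 0 ≤ t) (hc : 0 ≤ c) (h : t ^ 3 ≤ c ^ 2) :
    t * Real.sqrt t ≤ c := by
  have hs := Real.sqrt_nonneg t
  have h2 := Real.sq_sqrt ht
  have ha : (t * Real.sqrt t) ^ 2 = t ^ 3 := by rw [mul_pow, h2]; ring
  nlinarith [mul_nonneg ht hs, sq_nonneg (t * Real.sqrt t - c), sq_nonneg (t * Real.sqrt t + c)]

lemma bound32_ge {t c : ℝ} (ht : 0 ≤ t) (hc : 0 ≤ c) (h : c ^ 2 ≤ t ^ 3) :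
    c ≤ t * Real.sqrt t := by
  have hs := Real.sqrt_nonneg t
  have h2 := Real.sq_sqrt ht
  have ha : (t * Real.sqrt t) ^ 2 = t ^ 3 := by rw [mul_pow, h2]; ring
  nlinarith [mul_nonneg ht hs, sq_nonneg (t * Real.sqrt t - c), sq_nonneg (t * Real.sqrt t + c)]

lemma rpow32 {x : ℝ} (hx : 0 ≤ x) : x ^ (3 / 2 : ℝ) = x * Real.sqrt x := by
  rw [show (3 / 2 : ℝ) = 1 + 1 / 2 by norm_num, Real.rpow_add' hx (by norm_num),
    Real.rpow_one, ← Real.sqrt_eq_rpow]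

lemma det2_eq (μ a b c d : ℂ) :
    det ((μ • 1 - !![a, b; c, d] : Matrix (Fin 2) (Fin 2) ℂ)) = (μ - a) * (μ - d) - b * c := by
  simp [Matrix.det_fin_two, Matrix.one_apply]

lemma eig_root {M : Matrix (Fin 2) (Fin 2) ℂ} (hM : M.IsHermitian) (i : Fin 2) :
    det (((hM.eigenvalues i : ℝ) : ℂ) • (1 : Matrix (Fin 2) (Fin 2) ℂ) - M) = 0 := by
  have h := hM.eigenvalues_mem_spectrum_real i
  rw [spectrum.mem_iff] at h
  by_contra hd
  apply h
  rw [Matrix.isUnit_iff_isUnit_det]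
  have he : algebraMap ℝ (Matrix (Fin 2) (Fin 2) ℂ) (hM.eigenvalues i) - M
      = ((hM.eigenvalues i : ℝ) : ℂ) • (1 : Matrix (Fin 2) (Fin 2) ℂ) - M := by
    congr 1
    rw [Algebra.algebraMap_eq_smul_one]
    ext a b
    simp [Matrix.smul_apply, Matrix.one_apply]
  rw [he]
  exact isUnit_iff_ne_zero.mpr hd

lemma quad_eig {M : Matrix (Fin 2) (Fin 2) ℂ} {a b c d : ℝ}
    (hMM : Mᴴ * M = !![(a : ℂ), b; c, d]) (i : Fin 2) :
    ((Matrix.posSemidef_conjTranspose_mul_self M).isHermitian.eigenvalues i - a)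
      * ((Matrix.posSemidef_conjTranspose_mul_self M).isHermitian.eigenvalues i - d)
      - b * c = 0 := by
  have h := eig_root (Matrix.posSemidef_conjTranspose_mul_self M).isHermitian i
  obtain ⟨x, hx⟩ : ∃ x : ℝ,
      (Matrix.posSemidef_conjTranspose_mul_self M).isHermitian.eigenvalues i = x := ⟨_, rfl⟩
  rw [hx] at h ⊢
  rw [hMM, det2_eq] at h
  have h2 : (((x - a) * (x - d) - b * c : ℝ) : ℂ) = 0 := by
    push_cast
    linear_combination h
  exact_mod_cast h2

lemma prod_eig {M : Matrix (Fin 2) (Fin 2) ℂ} {a b c d : ℝ}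
    (hMM : Mᴴ * M = !![(a : ℂ), b; c, d]) :
    (Matrix.posSemidef_conjTranspose_mul_self M).isHermitian.eigenvalues 0
      * (Matrix.posSemidef_conjTranspose_mul_self M).isHermitian.eigenvalues 1
      = a * d - b * c := by
  have h := (Matrix.posSemidef_conjTranspose_mul_self M).isHermitian.det_eq_prod_eigenvalues
  obtain ⟨x, hx⟩ : ∃ x : ℝ,
      (Matrix.posSemidef_conjTranspose_mul_self M).isHermitian.eigenvalues 0 = x := ⟨_, rfl⟩
  obtain ⟨y, hy⟩ : ∃ y : ℝ,
      (Matrix.posSemidef_conjTranspose_mul_self M).isHermitian.eigenvalues 1 = y := ⟨_, rfl⟩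
  rw [Fin.prod_univ_two, hx, hy] at h
  rw [hx, hy]
  rw [hMM] at h
  have h2 : ((x * y : ℝ) : ℂ) = ((a * d - b * c : ℝ) : ℂ) := by
    have hdet : (!![(a : ℂ), b; c, d]).det = (a : ℂ) * d - b * c := by
      simp [Matrix.det_fin_two]
    simp only [Complex.coe_algebraMap] at h ⊢
    push_cast
    linear_combination hdet - h
  exact_mod_cast h2

lemma eigs_nonneg (M : Matrix (Fin 2) (Fin 2) ℂ) (i : Fin 2) :
    0 ≤ (Matrix.posSemidef_conjTranspose_mul_self M).isHermitian.eigenvalues i :=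
  (Matrix.posSemidef_conjTranspose_mul_self M).eigenvalues_nonneg i

lemma keyAB {t0 t1 : ℝ} (h0 : 0 ≤ t0) (h1 : 0 ≤ t1)
    (r0 : t0 ^ 2 * t0 ^ 2 - 63 * t0 ^ 2 + 841 = 0)
    (r1 : t1 ^ 2 * t1 ^ 2 - 63 * t1 ^ 2 + 841 = 0)
    (hp : t0 ^ 2 * t1 ^ 2 = 841) :
    t0 * Real.sqrt t0 + t1 * Real.sqrt t1 ≤ 26.19812 := by
  set u := Real.sqrt 5 with hu
  have hu2 : u ^ 2 = 5 := Real.sq_sqrt (by norm_num)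
  have hun : 0 ≤ u := Real.sqrt_nonneg 5
  have hub : u ≤ 2.2360680 := by nlinarith
  have hul : 2.2360679 ≤ u := by nlinarith
  have hmul : t0 * t1 = 29 := by
    have h : (t0 * t1 - 29) * (t0 * t1 + 29) = 0 := by linear_combination hp
    rcases mul_eq_zero.1 h with h | h
    · linarith
    · nlinarith [mul_nonneg h0 h1]
  have hsum2 : t0 ^ 2 + t1 ^ 2 = 63 := by
    have h : (t0 ^ 2 - t1 ^ 2) * (t0 ^ 2 + t1 ^ 2 - 63) = 0 := by linear_combination r0 - r1
    rcases mul_eq_zero.1 h with h | h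
    · exfalso; nlinarith
    · linarith
  have hsum : t0 + t1 = 11 := by
    have h : (t0 + t1 - 11) * (t0 + t1 + 11) = 0 := by linear_combination hsum2 + 2 * hmul
    rcases mul_eq_zero.1 h with h | h
    · linarith
    · nlinarith
  have hq0 : t0 ^ 2 - 11 * t0 + 29 = 0 := by nlinarith [hsum, hmul]
  have hb1 : ((11 + u) / 2) * Real.sqrt ((11 + u) / 2) ≤ 17.02527 := by
    apply bound32_le (by linarith) (by norm_num)
    have hc : ((11 + u) / 2) ^ 3 = 187 + 46 * u := by linear_combination ((u + 33) / 8) * hu2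
    rw [hc]; nlinarith
  have hb2 : ((11 - u) / 2) * Real.sqrt ((11 - u) / 2) ≤ 9.17285 := by
    apply bound32_le (by nlinarith) (by norm_num)
    have hc : ((11 - u) / 2) ^ 3 = 187 - 46 * u := by linear_combination ((33 - u) / 8) * hu2
    rw [hc]; nlinarith
  have hq : (2 * t0 - 11 - u) * (2 * t0 - 11 + u) = 0 := by linear_combination 4 * hq0 - hu2
  rcases mul_eq_zero.1 hq with h | h
  · have e0 : t0 = (11 + u) / 2 := by linarith
    have e1 : t1 = (11 - u) / 2 := by linarith
    rw [e0, e1]; linarith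
  · have e0 : t0 = (11 - u) / 2 := by linarith
    have e1 : t1 = (11 + u) / 2 := by linarith
    rw [e0, e1]; linarith

lemma schatten_bound {X : Matrix (Fin 2) (Fin 2) ℂ} {b : ℝ}
    (hMM : Xᴴ * X = !![((37 : ℝ) : ℂ), (b : ℝ); (b : ℝ), ((26 : ℝ) : ℂ)])
    (hb : b * b = 121) :
    schattenPow (3 / 2) X ≤ 26.19812 := by
  set ev := (Matrix.posSemidef_conjTranspose_mul_self X).isHermitian.eigenvalues with hev
  have hq : ∀ i, (ev i - 37) * (ev i - 26) - b * b = 0 := fun i => quad_eig hMM i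
  have hprod : ev 0 * ev 1 = 37 * 26 - b * b := prod_eig hMM
  have hnn : ∀ i, 0 ≤ ev i := eigs_nonneg X
  have hsv : ∀ i, sv X i = Real.sqrt (ev i) := fun i => rfl
  have hsq : ∀ i, Real.sqrt (ev i) ^ 2 = ev i := fun i => Real.sq_sqrt (hnn i)
  have hexp : schattenPow (3 / 2) X
      = sv X 0 * Real.sqrt (sv X 0) + sv X 1 * Real.sqrt (sv X 1) := by
    have hn0 : (0 : ℝ) ≤ sv X 0 := by rw [hsv 0]; exact Real.sqrt_nonneg _
    have hn1 : (0 : ℝ) ≤ sv X 1 := by rw [hsv 1]; exact Real.sqrt_nonneg _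
    rw [schattenPow, Fin.sum_univ_two, rpow32 hn0, rpow32 hn1]
  rw [hexp, hsv 0, hsv 1]
  apply keyAB (Real.sqrt_nonneg _) (Real.sqrt_nonneg _)
  · rw [hsq]; rw [hb] at hq; linear_combination hq 0
  · rw [hsq]; rw [hb] at hq; linear_combination hq 1
  · rw [hsq, hsq, hprod, hb]; norm_num

theorem counterexample_to_aligned_rearrangement :
    ∃ A B : Matrix (Fin 2) (Fin 2) ℂ,
      A.IsHermitian ∧ B.IsHermitian ∧ (A + B).PosSemidef ∧ (A - B).PosSemidef ∧
      ∃ p : ℝ, 1 < p ∧ p < 2 ∧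
        schattenPow p (A + B) + schattenPow p (A - B) <
          (∑ i, |svDesc A i + svDesc B i| ^ p) + (∑ i, |svDesc A i - svDesc B i| ^ p) := by
  refine ⟨!![6, 0; 0, 5], !![0, 1; 1, 0], ?_, ?_, ?_, ?_, 3 / 2, by norm_num, by norm_num, ?_⟩
  · show (!![6, 0; 0, 5] : Matrix (Fin 2) (Fin 2) ℂ)ᴴ = _
    ext i j
    fin_cases i <;> fin_cases j <;> simp
  · show (!![0, 1; 1, 0] : Matrix (Fin 2) (Fin 2) ℂ)ᴴ = _
    ext i j
    fin_cases i <;> fin_cases j <;> simp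
  · rw [posSemidef_iff_dotProduct_mulVec]
    constructor
    · show (!![6, 0; 0, 5] + !![0, 1; 1, 0] : Matrix (Fin 2) (Fin 2) ℂ)ᴴ = _
      ext i j
      fin_cases i <;> fin_cases j <;> simp
    · intro x
      have hx : star x ⬝ᵥ ((!![6, 0; 0, 5] + !![0, 1; 1, 0] : Matrix (Fin 2) (Fin 2) ℂ) *ᵥ x)
          = (6 : ℂ) * (star (x 0) * x 0) + star (x 0) * x 1 + star (x 1) * x 0
            + 5 * (star (x 1) * x 1) := by
        simp [dotProduct, mulVec, Fin.sum_univ_two]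
        ring
      rw [hx, Complex.le_def]
      constructor
      · simp [Complex.add_re, Complex.mul_re]
        nlinarith [sq_nonneg ((x 0).re + (x 1).re), sq_nonneg ((x 0).im + (x 1).im)]
      · simp [Complex.add_im, Complex.mul_im]
        ring
  · rw [posSemidef_iff_dotProduct_mulVec]
    constructor
    · show (!![6, 0; 0, 5] - !![0, 1; 1, 0] : Matrix (Fin 2) (Fin 2) ℂ)ᴴ = _
      ext i j
      fin_cases i <;> fin_cases j <;> simp
    · intro x
      have hx : star x ⬝ᵥ ((!![6, 0; 0, 5] - !![0, 1; 1, 0] : Matrix (Fin 2) (Fin 2) ℂ) *ᵥ x)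
          = (6 : ℂ) * (star (x 0) * x 0) - star (x 0) * x 1 - star (x 1) * x 0
            + 5 * (star (x 1) * x 1) := by
        simp [dotProduct, mulVec, Fin.sum_univ_two]
        ring
      rw [hx, Complex.le_def]
      constructor
      · simp [Complex.add_re, Complex.sub_re, Complex.mul_re]
        nlinarith [sq_nonneg ((x 0).re - (x 1).re), sq_nonneg ((x 0).im - (x 1).im)]
      · simp [Complex.add_im, Complex.sub_im, Complex.mul_im]
        ring
  · -- the inequality
    set A : Matrix (Fin 2) (Fin 2) ℂ := !![6, 0; 0, 5] with hAdef
    set B : Matrix (Fin 2) (Fin 2) ℂ := !![0, 1; 1, 0] with hBdef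
    -- Schatten bounds for A ± B
    have hM1 : (A + B)ᴴ * (A + B)
        = !![((37 : ℝ) : ℂ), ((11 : ℝ) : ℂ); ((11 : ℝ) : ℂ), ((26 : ℝ) : ℂ)] := by
      ext i j
      fin_cases i <;> fin_cases j <;>
        simp [hAdef, hBdef, Matrix.mul_apply, Fin.sum_univ_two] <;> norm_num [Complex.ext_iff]
    have hM2 : (A - B)ᴴ * (A - B)
        = !![((37 : ℝ) : ℂ), ((-11 : ℝ) : ℂ); ((-11 : ℝ) : ℂ), ((26 : ℝ) : ℂ)] := by
      ext i j
      fin_cases i <;> fin_cases j <;>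
        simp [hAdef, hBdef, Matrix.mul_apply, Fin.sum_univ_two] <;> norm_num [Complex.ext_iff]
    have hS1 : schattenPow (3 / 2) (A + B) ≤ 26.19812 := schatten_bound hM1 (by norm_num)
    have hS2 : schattenPow (3 / 2) (A - B) ≤ 26.19812 := schatten_bound hM2 (by norm_num)
    -- singular values of A
    have hAA : Aᴴ * A = !![((36 : ℝ) : ℂ), ((0 : ℝ) : ℂ); ((0 : ℝ) : ℂ), ((25 : ℝ) : ℂ)] := by
      ext i j
      fin_cases i <;> fin_cases j <;>
        simp [hAdef, Matrix.mul_apply, Fin.sum_univ_two] <;> norm_num [Complex.ext_iff]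
    set evA := (Matrix.posSemidef_conjTranspose_mul_self A).isHermitian.eigenvalues with hevA
    have hprodA : evA 0 * evA 1 = 900 := by
      have := prod_eig hAA
      rw [← hevA] at this
      linarith
    have h36 : ∀ i, evA i = 36 ∨ evA i = 25 := by
      intro i
      have h := quad_eig hAA i
      rw [← hevA] at h
      have h' : (evA i - 36) * (evA i - 25) = 0 := by linarith
      rcases mul_eq_zero.1 h' with h'' | h''
      · left; linarith
      · right; linarith
    have hsvA : ∀ i, sv A i = Real.sqrt (evA i) := fun i => rfl
    have s36 : Real.sqrt 36 = 6 := by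
      rw [show (36 : ℝ) = 6 ^ 2 by norm_num, Real.sqrt_sq (by norm_num)]
    have s25 : Real.sqrt 25 = 5 := by
      rw [show (25 : ℝ) = 5 ^ 2 by norm_num, Real.sqrt_sq (by norm_num)]
    have hsvA2 : (sv A 0 = 6 ∧ sv A 1 = 5) ∨ (sv A 0 = 5 ∧ sv A 1 = 6) := by
      rcases h36 0 with e0 | e0 <;> rcases h36 1 with e1 | e1
      · exfalso; rw [e0, e1] at hprodA; norm_num at hprodA
      · left; constructor
        · rw [hsvA 0, e0, s36]
        · rw [hsvA 1, e1, s25]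
      · right; constructor
        · rw [hsvA 0, e0, s25]
        · rw [hsvA 1, e1, s36]
      · exfalso; rw [e0, e1] at hprodA; norm_num at hprodA
    have hmono := Tuple.monotone_sort (sv A) (show ((0 : Fin 2)) ≤ 1 by decide)
    have hrev0 : (0 : Fin 2).rev = 1 := by decide
    have hrev1 : (1 : Fin 2).rev = 0 := by decide
    have hdesc : svDesc A 0 = 6 ∧ svDesc A 1 = 5 := by
      rcases perm_fin_two' (Tuple.sort (sv A)) with ⟨h0, h1⟩ | ⟨h0, h1⟩ <;>
        rcases hsvA2 with ⟨e0, e1⟩ | ⟨e0, e1⟩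
      · exfalso
        have h := hmono
        rw [Function.comp_apply, Function.comp_apply, h0, h1, e0, e1] at h
        norm_num at h
      · constructor
        · show svAsc A (0 : Fin 2).rev = 6
          rw [hrev0]
          show sv A (Tuple.sort (sv A) 1) = 6
          rw [h1, e1]
        · show svAsc A (1 : Fin 2).rev = 5
          rw [hrev1]
          show sv A (Tuple.sort (sv A) 0) = 5
          rw [h0, e0]
      · constructor
        · show svAsc A (0 : Fin 2).rev = 6
          rw [hrev0]
          show sv A (Tuple.sort (sv A) 1) = 6
          rw [h1, e0]
        · show svAsc A (1 : Fin 2).rev = 5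
          rw [hrev1]
          show sv A (Tuple.sort (sv A) 0) = 5
          rw [h0, e1]
      · exfalso
        have h := hmono
        rw [Function.comp_apply, Function.comp_apply, h0, h1, e0, e1] at h
        norm_num at h
    -- singular values of B
    have hBB : Bᴴ * B = !![((1 : ℝ) : ℂ), ((0 : ℝ) : ℂ); ((0 : ℝ) : ℂ), ((1 : ℝ) : ℂ)] := by
      ext i j
      fin_cases i <;> fin_cases j <;>
        simp [hBdef, Matrix.mul_apply, Fin.sum_univ_two] <;> norm_num [Complex.ext_iff]
    have hsvB : ∀ i, sv B i = 1 := by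
      intro i
      have h := quad_eig hBB i
      have h' : ((Matrix.posSemidef_conjTranspose_mul_self B).isHermitian.eigenvalues i - 1)
          * ((Matrix.posSemidef_conjTranspose_mul_self B).isHermitian.eigenvalues i - 1) = 0 := by
        linarith
      have h'' := mul_self_eq_zero.1 h'
      show Real.sqrt _ = 1
      rw [show (Matrix.posSemidef_conjTranspose_mul_self B).isHermitian.eigenvalues i = 1 by
        linarith]
      exact Real.sqrt_one
    have hdescB : ∀ i, svDesc B i = 1 := fun i => hsvB _
    -- assemble
    rw [Fin.sum_univ_two, Fin.sum_univ_two, hdesc.1, hdesc.2, hdescB 0, hdescB 1]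
    have h7 : (18.52025 : ℝ) ≤ 7 * Real.sqrt 7 :=
      bound32_ge (by norm_num) (by norm_num) (by norm_num)
    have h6 : (14.69693 : ℝ) ≤ 6 * Real.sqrt 6 :=
      bound32_ge (by norm_num) (by norm_num) (by norm_num)
    have h5 : (11.18033 : ℝ) ≤ 5 * Real.sqrt 5 :=
      bound32_ge (by norm_num) (by norm_num) (by norm_num)
    have h4 : (8 : ℝ) ≤ 4 * Real.sqrt 4 :=
      bound32_ge (by norm_num) (by norm_num) (by norm_num)
    have e71 : |(6 : ℝ) + 1| ^ (3 / 2 : ℝ) = 7 * Real.sqrt 7 := by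
      rw [show |(6 : ℝ) + 1| = 7 by norm_num, rpow32 (by norm_num)]
    have e61 : |(5 : ℝ) + 1| ^ (3 / 2 : ℝ) = 6 * Real.sqrt 6 := by
      rw [show |(5 : ℝ) + 1| = 6 by norm_num, rpow32 (by norm_num)]
    have e51 : |(6 : ℝ) - 1| ^ (3 / 2 : ℝ) = 5 * Real.sqrt 5 := by
      rw [show |(6 : ℝ) - 1| = 5 by norm_num, rpow32 (by norm_num)]
    have e41 : |(5 : ℝ) - 1| ^ (3 / 2 : ℝ) = 4 * Real.sqrt 4 := by
      rw [show |(5 : ℝ) - 1| = 4 by norm_num, rpow32 (by norm_num)]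
    rw [e71, e61, e51, e41]
    linarith
end
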